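/- arXiv:math/0609682 — 3 statements merged into one kernel-verified Lean document; each statement's English description precedes it below -/
import Mathlib

section
/- If the fourth spectral moment λ₄ := ∫_ℝ λ⁴ dμ(λ) is infinite, then L(τ)/τ = (r''(τ) − r''(0))/τ² tends to +∞ as τ → 0⁺. -/
open MeasureTheory ProbabilityTheory Set Filter Topology Real
open scoped ENNReal NNReal

/-- The correlation function `r(τ) = ∫ cos(λτ) dμ(λ)` associated with a spectral measure `μ`. -/
noncomputable def specCorr (μ : MeasureTheory.Measure ℝ) (τ : ℝ) : ℝ :=
  ∫ l : ℝ, Real.cos (l * τ) ∂μ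

/-- The Geman function `L(τ) = (r''(τ) − r''(0))/τ`. -/
noncomputable def gemanL (μ : MeasureTheory.Measure ℝ) (τ : ℝ) : ℝ :=
  (deriv (deriv (specCorr μ)) τ - deriv (deriv (specCorr μ)) 0) / τ

/-- `σ²(τ) = −r''(0) − r'(τ)²/(1 − r²(τ))`, the conditional variance of `Ẋ₀` given
`X₀` and `X_τ`. -/
noncomputable def sigmaSq (μ : MeasureTheory.Measure ℝ) (τ : ℝ) : ℝ :=
  -(deriv (deriv (specCorr μ)) 0) - (deriv (specCorr μ) τ) ^ 2 / (1 - (specCorr μ τ) ^ 2)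

/-- Condition (1) of Kratz–León: near `0`, `r(τ) = 1 + (r''(0)/2)τ² + θ(τ)` with
`θ(τ) > 0`, `θ(τ)/τ² → 0`, `θ'(τ)/τ → 0` and `θ''(τ) → 0` as `τ → 0⁺`;
`r` is moreover twice differentiable. -/
def ConditionOne (r : ℝ → ℝ) : Prop :=
  (∀ τ : ℝ, DifferentiableAt ℝ r τ ∧ DifferentiableAt ℝ (deriv r) τ) ∧
  ∃ δ₀ > (0:ℝ), ∃ θ : ℝ → ℝ,
    (∀ τ ∈ Set.Ioc (0:ℝ) δ₀,
        r τ = 1 + (deriv (deriv r) 0 / 2) * τ ^ 2 + θ τ ∧ 0 < θ τ) ∧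
    Filter.Tendsto (fun τ => θ τ / τ ^ 2) (nhdsWithin 0 (Set.Ioi 0)) (nhds 0) ∧
    Filter.Tendsto (fun τ => deriv θ τ / τ) (nhdsWithin 0 (Set.Ioi 0)) (nhds 0) ∧
    Filter.Tendsto (fun τ => deriv (deriv θ) τ) (nhdsWithin 0 (Set.Ioi 0)) (nhds 0)

noncomputable def specD1 (μ : MeasureTheory.Measure ℝ) (τ : ℝ) : ℝ :=
  ∫ l : ℝ, -Real.sin (l * τ) * l ∂μ

noncomputable def specD2 (μ : MeasureTheory.Measure ℝ) (τ : ℝ) : ℝ :=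
  ∫ l : ℝ, -(l ^ 2 * Real.cos (l * τ)) ∂μ

variable {μ : MeasureTheory.Measure ℝ} [IsProbabilityMeasure μ]

lemma bnd_int (hlam2fin : Integrable (fun l : ℝ => l ^ 2) μ) :
    Integrable (fun l : ℝ => 1 + l ^ 2) μ :=
  (integrable_const 1).add hlam2fin

lemma hasDerivAt_inner1 (l x : ℝ) :
    HasDerivAt (fun x => Real.cos (l * x)) (-Real.sin (l * x) * l) x := by
  have h1 : HasDerivAt (fun x : ℝ => l * x) (l * 1) x := (hasDerivAt_id x).const_mul l
  simpa [Function.comp_def] using (Real.hasDerivAt_cos (l * x)).comp x h1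

lemma hasDerivAt_inner2 (l x : ℝ) :
    HasDerivAt (fun x => -Real.sin (l * x) * l) (-(l ^ 2 * Real.cos (l * x))) x := by
  have h1 : HasDerivAt (fun x : ℝ => l * x) (l * 1) x := (hasDerivAt_id x).const_mul l
  have h2 := (Real.hasDerivAt_sin (l * x)).comp x h1
  have h3 := (h2.neg).mul_const l
  exact h3.congr_deriv (by ring)

lemma hasDerivAt_specCorr (hlam2fin : Integrable (fun l : ℝ => l ^ 2) μ) (τ : ℝ) :
    HasDerivAt (specCorr μ) (specD1 μ τ) τ := by
  have := hasDerivAt_integral_of_dominated_loc_of_deriv_le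
    (F := fun x (l : ℝ) => Real.cos (l * x)) (F' := fun x (l : ℝ) => -Real.sin (l * x) * l)
    (x₀ := τ) (bound := fun l => 1 + l ^ 2) (s := Metric.ball τ 1) (Metric.ball_mem_nhds τ one_pos)
    (Eventually.of_forall fun x =>
      (Continuous.aestronglyMeasurable (by continuity)))
    (by
      refine (integrable_const (1:ℝ)).mono' (Continuous.aestronglyMeasurable (by continuity)) ?_
      filter_upwards with l
      simpa using Real.abs_cos_le_one (l * τ))
    (Continuous.aestronglyMeasurable (by continuity))
    (by
      filter_upwards with l x _
      have : |(-Real.sin (l * x)) * l| ≤ |l| := by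
        rw [abs_mul]
        calc |(-Real.sin (l * x))| * |l| ≤ 1 * |l| := by
              apply mul_le_mul_of_nonneg_right _ (abs_nonneg l)
              rw [abs_neg]; exact Real.abs_sin_le_one _
          _ = |l| := one_mul _
      refine this.trans ?_
      nlinarith [abs_nonneg l, sq_abs l, sq_nonneg (|l| - 1)])
    (bnd_int hlam2fin)
    (by filter_upwards with l x _; exact hasDerivAt_inner1 l x)
  exact this.2

lemma hasDerivAt_specD1 (hlam2fin : Integrable (fun l : ℝ => l ^ 2) μ) (τ : ℝ) :
    HasDerivAt (specD1 μ) (specD2 μ τ) τ := by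
  have := hasDerivAt_integral_of_dominated_loc_of_deriv_le
    (F := fun x (l : ℝ) => -Real.sin (l * x) * l) (F' := fun x (l : ℝ) => -(l ^ 2 * Real.cos (l * x)))
    (x₀ := τ) (bound := fun l => 1 + l ^ 2) (s := Metric.ball τ 1) (Metric.ball_mem_nhds τ one_pos)
    (Eventually.of_forall fun x =>
      (Continuous.aestronglyMeasurable (by continuity)))
    (by
      refine (bnd_int hlam2fin).mono' (Continuous.aestronglyMeasurable (by continuity)) ?_
      filter_upwards with l
      have h1 : |(-Real.sin (l * τ)) * l| ≤ |l| := by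
        rw [abs_mul]
        calc |(-Real.sin (l * τ))| * |l| ≤ 1 * |l| := by
              apply mul_le_mul_of_nonneg_right _ (abs_nonneg l)
              rw [abs_neg]; exact Real.abs_sin_le_one _
          _ = |l| := one_mul _
      refine h1.trans ?_
      nlinarith [abs_nonneg l, sq_abs l, sq_nonneg (|l| - 1)])
    (Continuous.aestronglyMeasurable (by continuity))
    (by
      filter_upwards with l x _
      have : |(-(l ^ 2 * Real.cos (l * x)))| ≤ l ^ 2 := by
        rw [abs_neg, abs_mul, abs_of_nonneg (sq_nonneg l)]
        nlinarith [Real.abs_cos_le_one (l * x), abs_nonneg (Real.cos (l*x)), sq_nonneg l]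
      refine this.trans (by nlinarith)
      )
    (bnd_int hlam2fin)
    (by filter_upwards with l x _; exact hasDerivAt_inner2 l x)
  exact this.2

lemma deriv2_specCorr (hlam2fin : Integrable (fun l : ℝ => l ^ 2) μ) (τ : ℝ) :
    deriv (deriv (specCorr μ)) τ = specD2 μ τ := by
  have h1 : deriv (specCorr μ) = specD1 μ :=
    funext fun x => (hasDerivAt_specCorr hlam2fin x).deriv
  rw [h1]
  exact (hasDerivAt_specD1 hlam2fin τ).deriv

lemma int_sq_cos (hlam2fin : Integrable (fun l : ℝ => l ^ 2) μ) (τ : ℝ) :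
    Integrable (fun l : ℝ => l ^ 2 * Real.cos (l * τ)) μ := by
  refine hlam2fin.mono' (Continuous.aestronglyMeasurable (by continuity)) ?_
  filter_upwards with l
  rw [Real.norm_eq_abs, abs_mul, abs_of_nonneg (sq_nonneg l)]
  nlinarith [Real.abs_cos_le_one (l * τ), abs_nonneg (Real.cos (l*τ)), sq_nonneg l]

lemma gemanL_eq (hlam2fin : Integrable (fun l : ℝ => l ^ 2) μ) (τ : ℝ) :
    gemanL μ τ / τ = (∫ l : ℝ, l ^ 2 * (1 - Real.cos (l * τ)) ∂μ) / τ ^ 2 := by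
  unfold gemanL
  rw [deriv2_specCorr hlam2fin, deriv2_specCorr hlam2fin]
  unfold specD2
  have h0 : Integrable (fun l : ℝ => -(l ^ 2 * Real.cos (l * τ))) μ := (int_sq_cos hlam2fin τ).neg
  have h0' : Integrable (fun l : ℝ => -(l ^ 2 * Real.cos (l * 0))) μ := (int_sq_cos hlam2fin 0).neg
  rw [← integral_sub h0 h0']
  have : ∀ l : ℝ, -(l ^ 2 * Real.cos (l * τ)) - -(l ^ 2 * Real.cos (l * 0)) =
      l ^ 2 * (1 - Real.cos (l * τ)) := by
    intro l; simp [Real.cos_zero]; ring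
  simp_rw [this]
  rw [div_div, sq]

lemma exists_truncation (hlam4inf : ∫⁻ l : ℝ, ENNReal.ofReal (l ^ 4) ∂μ = ⊤) (C : ℝ) :
    ∃ M : ℝ, 0 ≤ M ∧ C < ∫ l in Icc (-M) M, l ^ 4 ∂μ := by
  set f : ℕ → ℝ → ℝ≥0∞ := fun n l =>
    (Icc (-(n:ℝ)) n).indicator (fun l => ENNReal.ofReal (l ^ 4)) l with hf
  have hmeas : ∀ n, AEMeasurable (f n) μ := fun n =>
    ((ENNReal.measurable_ofReal.comp (measurable_id.pow_const 4)).indicator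
      measurableSet_Icc).aemeasurable
  have hmono : ∀ᵐ l ∂μ, Monotone fun n => f n l := by
    filter_upwards with l
    intro n m hnm
    refine Set.indicator_le_indicator_of_subset (Icc_subset_Icc ?_ ?_) (fun _ => zero_le) l
    · simp only [neg_le_neg_iff]; exact_mod_cast hnm
    · exact_mod_cast hnm
  have htends : ∀ᵐ l ∂μ, Tendsto (fun n => f n l) atTop (𝓝 (ENNReal.ofReal (l ^ 4))) := by
    filter_upwards with l
    obtain ⟨N, hN⟩ := exists_nat_ge |l|
    refine tendsto_const_nhds.congr' ?_
    filter_upwards [eventually_ge_atTop N] with n hn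
    have : l ∈ Icc (-(n:ℝ)) n := by
      have h1 : |l| ≤ (n : ℝ) := hN.trans (by exact_mod_cast hn)
      exact ⟨neg_le_of_abs_le h1, le_of_abs_le h1⟩
    simp [hf, Set.indicator_of_mem this]
  have hT := MeasureTheory.lintegral_tendsto_of_tendsto_of_monotone hmeas hmono htends
  rw [hlam4inf] at hT
  have hev : ∀ᶠ n in atTop, ENNReal.ofReal C < ∫⁻ l, f n l ∂μ :=
    hT.eventually (eventually_gt_nhds ENNReal.ofReal_lt_top)
  obtain ⟨n, hn⟩ := hev.exists
  refine ⟨(n : ℝ), Nat.cast_nonneg n, ?_⟩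
  have hInt : IntegrableOn (fun l : ℝ => l ^ 4) (Icc (-(n:ℝ)) n) μ :=
    (continuous_pow 4).continuousOn.integrableOn_compact isCompact_Icc
  have heq : ∫⁻ l, f n l ∂μ = ENNReal.ofReal (∫ l in Icc (-(n:ℝ)) n, l ^ 4 ∂μ) := by
    show ∫⁻ l, (Icc (-(n:ℝ)) n).indicator (fun l => ENNReal.ofReal (l ^ 4)) l ∂μ = _
    rw [lintegral_indicator measurableSet_Icc]
    exact (MeasureTheory.ofReal_integral_eq_lintegral_ofReal hInt
      (Eventually.of_forall fun l => by positivity)).symm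
  rw [heq] at hn
  by_contra h
  push_neg at h
  exact absurd (ENNReal.ofReal_le_ofReal h) (not_le.2 hn)

theorem gemanL_div_tendsto_atTop_of_fourth_moment_infinite'
    (μ : Measure ℝ) [IsProbabilityMeasure μ]
    (hlam2fin : Integrable (fun l : ℝ => l ^ 2) μ)
    (hlam4inf : ∫⁻ l : ℝ, ENNReal.ofReal (l ^ 4) ∂μ = ⊤) :
    Tendsto (fun τ => gemanL μ τ / τ) (𝓝[>] 0) atTop := by
  rw [tendsto_atTop]
  intro K
  obtain ⟨M, hM0, hMK⟩ := exists_truncation hlam4inf (2 * K + 2)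
  set B : ℝ := M ^ 6 + M + 1 with hB
  have hM6 : (0:ℝ) ≤ M ^ 6 := by positivity
  have hB1 : 1 ≤ B := by nlinarith
  have hBpos : (0:ℝ) < B := lt_of_lt_of_le one_pos hB1
  have hmem : Ioo (0:ℝ) (1 / B) ∈ 𝓝[>] (0:ℝ) :=
    Ioo_mem_nhdsGT_of_mem ⟨le_refl 0, by positivity⟩
  filter_upwards [hmem] with τ hτ
  obtain ⟨hτ0, hτB⟩ := hτ
  rw [gemanL_eq hlam2fin, le_div_iff₀ (by positivity)]
  set s : Set ℝ := Icc (-M) M with hs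
  have hint_f : Integrable (fun l : ℝ => l ^ 2 * (1 - Real.cos (l * τ))) μ := by
    have h := hlam2fin.sub (int_sq_cos hlam2fin τ)
    refine h.congr (Eventually.of_forall fun l => ?_)
    simp only [Pi.sub_apply]
    ring
  have hnn : 0 ≤ᵐ[μ] fun l : ℝ => l ^ 2 * (1 - Real.cos (l * τ)) := by
    refine Eventually.of_forall fun l => ?_
    simp only [Pi.zero_apply]
    nlinarith [Real.cos_le_one (l * τ), sq_nonneg l]
  have step1 : ∫ l in s, l ^ 2 * (1 - Real.cos (l * τ)) ∂μ
      ≤ ∫ l : ℝ, l ^ 2 * (1 - Real.cos (l * τ)) ∂μ :=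
    setIntegral_le_integral hint_f hnn
  have hc1 : 5 * M ^ 6 * τ ^ 2 / 96 ≤ 1 := by
    have hτ2 : τ ^ 2 ≤ (1 / B) ^ 2 := by nlinarith
    have h1 : M ^ 6 * τ ^ 2 ≤ B * (1 / B) ^ 2 :=
      mul_le_mul (by nlinarith) hτ2 (by positivity) (by positivity)
    have h2 : B * (1 / B) ^ 2 = 1 / B := by field_simp
    have h3 : 1 / B ≤ 1 := by rw [div_le_one hBpos]; exact hB1
    nlinarith
  have hg_int : IntegrableOn
      (fun l : ℝ => τ ^ 2 / 2 * l ^ 4 - τ ^ 2 * (5 * M ^ 6 * τ ^ 2 / 96)) s μ :=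
    (Continuous.continuousOn ((continuous_const.mul (continuous_pow 4)).sub
      continuous_const)).integrableOn_compact isCompact_Icc
  have step2 : ∫ l in s, (τ ^ 2 / 2 * l ^ 4 - τ ^ 2 * (5 * M ^ 6 * τ ^ 2 / 96)) ∂μ
      ≤ ∫ l in s, l ^ 2 * (1 - Real.cos (l * τ)) ∂μ := by
    refine setIntegral_mono_on hg_int hint_f.integrableOn measurableSet_Icc ?_
    intro l hl
    have hlM : |l| ≤ M := abs_le.2 ⟨hl.1, hl.2⟩
    have hx : |l * τ| ≤ 1 := by
      rw [abs_mul, abs_of_pos hτ0]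
      have h1 : |l| * τ ≤ M * (1 / B) :=
        mul_le_mul hlM hτB.le hτ0.le hM0
      have h2 : M * (1 / B) ≤ 1 := by
        rw [mul_one_div, div_le_one hBpos]; nlinarith
      linarith
    have hcb := Real.cos_bound hx
    have h1 : Real.cos (l * τ) - (1 - (l * τ) ^ 2 / 2) ≤ |l * τ| ^ 4 * (5 / 96) :=
      (abs_le.1 hcb).2
    have h2 : |l * τ| ^ 4 = (l * τ) ^ 4 := by
      rw [← abs_pow]; exact abs_of_nonneg (by positivity)
    rw [h2] at h1
    have hl6 : l ^ 6 ≤ M ^ 6 := by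
      calc l ^ 6 = |l| ^ 6 := by rw [← abs_pow]; exact (abs_of_nonneg (by positivity)).symm
        _ ≤ M ^ 6 := pow_le_pow_left₀ (abs_nonneg l) hlM 6
    have key : l ^ 2 * ((l * τ) ^ 2 / 2 - (l * τ) ^ 4 * (5 / 96))
        ≤ l ^ 2 * (1 - Real.cos (l * τ)) :=
      mul_le_mul_of_nonneg_left (by linarith) (sq_nonneg l)
    have hl6τ : l ^ 6 * τ ^ 4 ≤ M ^ 6 * τ ^ 4 :=
      mul_le_mul_of_nonneg_right hl6 (by positivity)
    nlinarith [key, hl6τ]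
  have hint4 : IntegrableOn (fun l : ℝ => l ^ 4) s μ :=
    (continuous_pow 4).continuousOn.integrableOn_compact isCompact_Icc
  have hmle : (μ s).toReal ≤ 1 := by
    have h := ENNReal.toReal_mono (measure_ne_top μ univ) (measure_mono (subset_univ s))
    simpa [measure_univ] using h
  have hmnn : (0:ℝ) ≤ (μ s).toReal := ENNReal.toReal_nonneg
  have hcomp : ∫ l in s, (τ ^ 2 / 2 * l ^ 4 - τ ^ 2 * (5 * M ^ 6 * τ ^ 2 / 96)) ∂μ
      = τ ^ 2 / 2 * ∫ l in s, l ^ 4 ∂μ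
        - τ ^ 2 * (5 * M ^ 6 * τ ^ 2 / 96) * (μ s).toReal := by
    rw [integral_sub (hint4.const_mul _) (integrableOn_const (measure_ne_top μ s)),
      integral_const_mul, setIntegral_const, smul_eq_mul]
    simp only [Measure.real]; ring
  have hτ2nn : (0:ℝ) ≤ τ ^ 2 := sq_nonneg τ
  have h4 : τ ^ 2 / 2 * (2 * K + 2) ≤ τ ^ 2 / 2 * ∫ l in s, l ^ 4 ∂μ :=
    mul_le_mul_of_nonneg_left hMK.le (by positivity)
  have h5 : τ ^ 2 * (5 * M ^ 6 * τ ^ 2 / 96) * (μ s).toReal ≤ τ ^ 2 := by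
    nlinarith [mul_nonneg hτ2nn (by positivity : (0:ℝ) ≤ 5 * M ^ 6 * τ ^ 2 / 96)]
  have hid : τ ^ 2 / 2 * (2 * K + 2) = K * τ ^ 2 + τ ^ 2 := by ring
  linarith [step1, step2, hcomp, h4, h5, hid]

/-- if the fourth spectral moment `λ₄ = ∫ λ⁴ dμ` is infinite, then
`L(τ)/τ = (r''(τ) − r''(0))/τ² → +∞` as `τ → 0⁺`. -/
theorem gemanL_div_tendsto_atTop_of_fourth_moment_infinite
    (μ : Measure ℝ) [IsProbabilityMeasure μ]
    (hsymm : Measure.map (fun l => -l) μ = μ)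
    (hlam2fin : Integrable (fun l : ℝ => l ^ 2) μ)
    (hlam2pos : 0 < ∫ l : ℝ, l ^ 2 ∂μ)
    (hlam4inf : ∫⁻ l : ℝ, ENNReal.ofReal (l ^ 4) ∂μ = ⊤) :
    Tendsto (fun τ => gemanL μ τ / τ) (𝓝[>] 0) atTop :=
  gemanL_div_tendsto_atTop_of_fourth_moment_infinite' μ hlam2fin hlam4inf
end

section
/- There exist δ > 0 and a constant C < ∞ such that |r'(τ)|/σ(τ) ≤ C for all τ ∈ (0, δ], where σ(τ) = (−r''(0) − r'(τ)²/(1 − r²(τ)))^{1/2}. -/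
open MeasureTheory ProbabilityTheory Set Filter Topology Real
open scoped ENNReal NNReal

lemma integrable_abs_id (μ : Measure ℝ) [IsProbabilityMeasure μ]
    (h2 : Integrable (fun l : ℝ => l ^ 2) μ) : Integrable (fun l : ℝ => |l|) μ := by
  have h : Integrable (fun l : ℝ => 1 + l ^ 2) μ := (integrable_const 1).add h2
  refine h.mono' continuous_abs.aestronglyMeasurable ?_
  filter_upwards with l
  rw [Real.norm_eq_abs, abs_abs]
  nlinarith [sq_nonneg (|l| - 1), sq_abs l]

lemma specCorr_hasDerivAt (μ : Measure ℝ) [IsProbabilityMeasure μ]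
    (h2 : Integrable (fun l : ℝ => l ^ 2) μ) (x : ℝ) :
    HasDerivAt (specCorr μ) (∫ l : ℝ, -(l * Real.sin (l * x)) ∂μ) x := by
  have key := hasDerivAt_integral_of_dominated_loc_of_deriv_le
    (F := fun (y : ℝ) (l : ℝ) => Real.cos (l * y))
    (F' := fun (y : ℝ) (l : ℝ) => -(l * Real.sin (l * y)))
    (bound := fun l : ℝ => |l|) (μ := μ) (x₀ := x) (Metric.ball_mem_nhds x one_pos)
    (Filter.Eventually.of_forall fun y =>
      (Real.continuous_cos.comp (continuous_id.mul continuous_const)).aestronglyMeasurable)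
    ?_ ?_ ?_ ?_ ?_
  · exact key.2
  · exact (integrable_const 1).mono'
      (Real.continuous_cos.comp (continuous_id.mul continuous_const)).aestronglyMeasurable
      (Filter.Eventually.of_forall fun l => by
        rw [Real.norm_eq_abs]; exact Real.abs_cos_le_one _)
  · exact ((continuous_id.mul
      (Real.continuous_sin.comp (continuous_id.mul continuous_const))).neg).aestronglyMeasurable
  · filter_upwards with l y _
    rw [norm_neg, Real.norm_eq_abs, abs_mul]
    calc |l| * |Real.sin (l * y)| ≤ |l| * 1 :=
          mul_le_mul_of_nonneg_left (Real.abs_sin_le_one _) (abs_nonneg l)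
      _ = |l| := mul_one _
  · exact integrable_abs_id μ h2
  · filter_upwards with l y _
    have h1 : HasDerivAt (fun y : ℝ => l * y) l y := by
      simpa using (hasDerivAt_id y).const_mul l
    have := (Real.hasDerivAt_cos (l * y)).comp y h1
    exact this.congr_deriv (by ring)

lemma deriv_specCorr_eq (μ : Measure ℝ) [IsProbabilityMeasure μ]
    (h2 : Integrable (fun l : ℝ => l ^ 2) μ) :
    deriv (specCorr μ) = fun x => ∫ l : ℝ, -(l * Real.sin (l * x)) ∂μ :=
  funext fun x => (specCorr_hasDerivAt μ h2 x).deriv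

lemma deriv2_specCorr_zero (μ : Measure ℝ) [IsProbabilityMeasure μ]
    (h2 : Integrable (fun l : ℝ => l ^ 2) μ) :
    deriv (deriv (specCorr μ)) 0 = -∫ l : ℝ, l ^ 2 ∂μ := by
  rw [deriv_specCorr_eq μ h2]
  have key := hasDerivAt_integral_of_dominated_loc_of_deriv_le
    (F := fun (y : ℝ) (l : ℝ) => -(l * Real.sin (l * y)))
    (F' := fun (y : ℝ) (l : ℝ) => -(l ^ 2 * Real.cos (l * y)))
    (bound := fun l : ℝ => l ^ 2) (μ := μ) (x₀ := 0) (Metric.ball_mem_nhds 0 one_pos)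
    (Filter.Eventually.of_forall fun y =>
      ((continuous_id.mul
        (Real.continuous_sin.comp (continuous_id.mul continuous_const))).neg).aestronglyMeasurable)
    ?_ ?_ ?_ ?_ ?_
  · rw [key.2.deriv]
    rw [← integral_neg]
    congr 1; funext l; simp
  · refine h2.mono' ?_ ?_
    · exact ((continuous_id.mul
        (Real.continuous_sin.comp (continuous_id.mul continuous_const))).neg).aestronglyMeasurable
    · filter_upwards with l
      rw [norm_neg, Real.norm_eq_abs, abs_mul]
      calc |l| * |Real.sin (l * 0)| ≤ |l| * |l * 0| :=
            mul_le_mul_of_nonneg_left (Real.abs_sin_le_abs) (abs_nonneg l)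
        _ ≤ l ^ 2 := by simp [sq_nonneg]
  · exact ((continuous_pow 2).mul
      (Real.continuous_cos.comp (continuous_id.mul continuous_const))).neg.aestronglyMeasurable
  · filter_upwards with l y _
    rw [norm_neg, Real.norm_eq_abs, abs_mul]
    calc |l ^ 2| * |Real.cos (l * y)| ≤ |l ^ 2| * 1 :=
          mul_le_mul_of_nonneg_left (Real.abs_cos_le_one _) (abs_nonneg _)
      _ = l ^ 2 := by rw [mul_one, abs_of_nonneg (sq_nonneg l)]
  · exact h2
  · filter_upwards with l y _
    have h1 : HasDerivAt (fun y : ℝ => l * y) l y := by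
      simpa using (hasDerivAt_id y).const_mul l
    have := (((Real.hasDerivAt_sin (l * y)).comp y h1).const_mul l).neg
    exact this.congr_deriv (by ring)

lemma integral_cauchy_schwarz {μ : Measure ℝ} (f g : ℝ → ℝ)
    (hf2 : Integrable (fun l => f l ^ 2) μ) (hg2 : Integrable (fun l => g l ^ 2) μ)
    (hfg : Integrable (fun l => f l * g l) μ) :
    (∫ l, f l * g l ∂μ) ^ 2 ≤ (∫ l, f l ^ 2 ∂μ) * (∫ l, g l ^ 2 ∂μ) := by
  have key : ∀ t : ℝ, 0 ≤ (∫ l, g l ^ 2 ∂μ) * (t * t) + (2 * ∫ l, f l * g l ∂μ) * t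
      + ∫ l, f l ^ 2 ∂μ := by
    intro t
    have h0 : 0 ≤ ∫ l, (t * g l + f l) ^ 2 ∂μ := integral_nonneg fun l => sq_nonneg _
    have hexp : (fun l => (t * g l + f l) ^ 2)
        = fun l => ((t * t) * g l ^ 2 + (2 * t) * (f l * g l)) + f l ^ 2 := by
      funext l; ring
    have hA : Integrable (fun l => t * t * g l ^ 2 + 2 * t * (f l * g l)) μ :=
      (hg2.const_mul _).add (hfg.const_mul _)
    rw [hexp, integral_add hA hf2,
      integral_add (hg2.const_mul (t*t)) (hfg.const_mul (2*t)), MeasureTheory.integral_const_mul,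
      MeasureTheory.integral_const_mul] at h0
    linarith
  have hd := discrim_le_zero key
  rw [discrim] at hd
  nlinarith [hd]

lemma exists_two_levels (μ : Measure ℝ) [IsProbabilityMeasure μ]
    (hsupp : ∀ a b : ℝ, μ ({a, b}ᶜ) ≠ 0) :
    ∃ c d D : ℝ, 0 ≤ c ∧ c < d ∧ d ≤ D ∧
      μ {l : ℝ | l ^ 2 ≤ c} ≠ 0 ∧ μ {l : ℝ | l ^ 2 ∈ Set.Icc d D} ≠ 0 := by
  set A := {t : ℝ | μ {l : ℝ | l ^ 2 ≤ t} ≠ 0} with hA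
  have hAne : A.Nonempty := by
    by_contra h
    rw [Set.not_nonempty_iff_eq_empty] at h
    have hall : ∀ t : ℝ, μ {l : ℝ | l ^ 2 ≤ t} = 0 := by
      intro t
      by_contra ht
      exact Set.eq_empty_iff_forall_notMem.1 h t ht
    have hsub : (Set.univ : Set ℝ) ⊆ ⋃ n : ℕ, {l : ℝ | l ^ 2 ≤ n} := fun l _ =>
      Set.mem_iUnion.2 ⟨⌈l ^ 2⌉₊, Set.mem_setOf.2 (Nat.le_ceil _)⟩
    have := measure_mono_null hsub (measure_iUnion_null fun n => hall n)
    simp at this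
  have hmemnn : ∀ t ∈ A, (0:ℝ) ≤ t := by
    intro t ht
    by_contra h
    push_neg at h
    apply ht
    have : {l : ℝ | l ^ 2 ≤ t} = ∅ := by
      ext l; simp only [Set.mem_setOf_eq, Set.mem_empty_iff_false, iff_false, not_le]
      nlinarith [sq_nonneg l]
    rw [this]; exact measure_empty
  have hAbdd : BddBelow A := ⟨0, hmemnn⟩
  set t₀ := sInf A with ht₀def
  have ht₀ : 0 ≤ t₀ := le_csInf hAne hmemnn
  have hub : ∀ η : ℝ, 0 < η → μ {l : ℝ | l ^ 2 ≤ t₀ + η} ≠ 0 := by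
    intro η hη
    obtain ⟨s, hsA, hs⟩ := exists_lt_of_csInf_lt hAne (by linarith : sInf A < t₀ + η)
    intro h0
    exact hsA (measure_mono_null (fun l hl => le_trans hl hs.le) h0)
  by_cases hbig : ∀ n : ℕ, μ {l : ℝ | t₀ + 1 / (n + 1) ≤ l ^ 2} = 0
  · exfalso
    have hgt : μ {l : ℝ | t₀ < l ^ 2} = 0 := by
      refine measure_mono_null ?_ (measure_iUnion_null fun n => hbig n)
      intro l hl
      obtain ⟨n, hn⟩ := exists_nat_one_div_lt (sub_pos.2 (Set.mem_setOf.1 hl))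
      exact Set.mem_iUnion.2 ⟨n, by simp only [Set.mem_setOf_eq]; linarith⟩
    have hlow : ∀ t : ℝ, t < t₀ → μ {l : ℝ | l ^ 2 ≤ t} = 0 := by
      intro t ht
      by_contra h
      exact absurd (csInf_le hAbdd (Set.mem_setOf.2 h)) (not_le.2 ht)
    have hlt : μ {l : ℝ | l ^ 2 < t₀} = 0 := by
      refine measure_mono_null ?_
        (measure_iUnion_null fun n : ℕ => hlow (t₀ - 1 / (n + 1))
          (by have : (0:ℝ) < 1 / (n + 1) := by positivity
              linarith))
      intro l hl
      obtain ⟨n, hn⟩ := exists_nat_one_div_lt (sub_pos.2 (Set.mem_setOf.1 hl))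
      exact Set.mem_iUnion.2 ⟨n, by simp only [Set.mem_setOf_eq]; linarith⟩
    have hne : μ {l : ℝ | l ^ 2 ≠ t₀} = 0 := by
      refine measure_mono_null (fun l hl => ?_) (measure_union_null hlt hgt)
      exact lt_or_gt_of_ne hl
    apply hsupp (Real.sqrt t₀) (-Real.sqrt t₀)
    refine measure_mono_null (fun l hl => ?_) hne
    simp only [Set.mem_compl_iff, Set.mem_insert_iff, Set.mem_singleton_iff, not_or] at hl
    intro hsq
    have hsq' : l ^ 2 = Real.sqrt t₀ ^ 2 := by rw [Real.sq_sqrt ht₀]; exact hsq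
    rcases sq_eq_sq_iff_eq_or_eq_neg.1 hsq' with h | h
    · exact hl.1 h
    · exact hl.2 h
  · push_neg at hbig
    obtain ⟨n, hn⟩ := hbig
    have hpos1 : (0:ℝ) < 1 / (n + 1) := by positivity
    refine ⟨t₀ + 1 / (2 * (n + 1)), t₀ + 1 / (n + 1), ?_⟩
    have hsub : {l : ℝ | t₀ + 1 / (n + 1) ≤ l ^ 2} ⊆
        ⋃ m : ℕ, {l : ℝ | l ^ 2 ∈ Set.Icc (t₀ + 1 / (n + 1)) (t₀ + 1 / (n + 1) + m)} := by
      intro l hl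
      refine Set.mem_iUnion.2 ⟨⌈l ^ 2 - (t₀ + 1 / (n + 1))⌉₊, hl, ?_⟩
      have := Nat.le_ceil (l ^ 2 - (t₀ + 1 / (n + 1)))
      linarith
    have hex : ∃ m : ℕ, μ {l : ℝ | l ^ 2 ∈
        Set.Icc (t₀ + 1 / (n + 1)) (t₀ + 1 / (n + 1) + m)} ≠ 0 := by
      by_contra h
      push_neg at h
      exact hn (measure_mono_null hsub (measure_iUnion_null h))
    obtain ⟨m, hm⟩ := hex
    have hmnn : (0:ℝ) ≤ (m:ℝ) := Nat.cast_nonneg m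
    have hhalf : 1 / (2 * ((n:ℝ) + 1)) < 1 / (n + 1) := by
      rw [div_lt_div_iff₀ (by positivity) (by positivity)]
      nlinarith
    exact ⟨t₀ + 1 / (n + 1) + m, by positivity, by linarith, by linarith,
      hub _ (by positivity), hm⟩

set_option maxHeartbeats 2000000 in
/-- `|r'(τ)|/σ(τ)` is bounded on some `(0, δ]`. -/
theorem deriv_specCorr_div_sigma_bounded
    (μ : Measure ℝ) [IsProbabilityMeasure μ]
    (hsymm : Measure.map (fun l => -l) μ = μ)
    (hlam2fin : Integrable (fun l : ℝ => l ^ 2) μ)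
    (hlam2pos : 0 < ∫ l : ℝ, l ^ 2 ∂μ)
    (hsupp : ∀ a b : ℝ, μ ({a, b}ᶜ) ≠ 0)
    (hcond1 : ConditionOne (specCorr μ))
    (hpos : ∃ δ₁ > (0:ℝ), ∀ τ ∈ Set.Ioc (0:ℝ) δ₁,
      0 < 1 - (specCorr μ τ) ^ 2 ∧ 0 < sigmaSq μ τ) :
    ∃ δ > (0:ℝ), ∃ C : ℝ, ∀ τ ∈ Set.Ioc (0:ℝ) δ,
      |deriv (specCorr μ) τ| / Real.sqrt (sigmaSq μ τ) ≤ C := by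
  obtain ⟨δ₁, hδ₁, hδ₁p⟩ := hpos
  obtain ⟨c, d, D, hc0, hcd, hdD, hS, hT⟩ := exists_two_levels μ hsupp
  set lam := ∫ l : ℝ, l ^ 2 ∂μ with hlam
  clear_value lam
  have hD0 : 0 < D := lt_of_lt_of_le (lt_of_le_of_lt hc0 hcd) hdD
  set e := d - c with he
  have he0 : 0 < e := by rw [he]; exact sub_pos.2 hcd
  clear_value e
  set S : Set ℝ := {l | l ^ 2 ≤ c} with hSdef
  set T : Set ℝ := {l | l ^ 2 ∈ Set.Icc d D} with hTdef
  have hSm : MeasurableSet S := measurableSet_le (continuous_pow 2).measurable measurable_const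
  have hTm : MeasurableSet T := (continuous_pow 2).measurable measurableSet_Icc
  have hp : 0 < (μ S).toReal := ENNReal.toReal_pos hS (measure_ne_top μ S)
  have hq : 0 < (μ T).toReal := ENNReal.toReal_pos hT (measure_ne_top μ T)
  set m := min (μ S).toReal (μ T).toReal with hmdef
  have hm : 0 < m := by rw [hmdef]; exact lt_min hp hq
  clear_value m
  set K := m * e ^ 2 / 64 with hKdef
  have hK0 : 0 < K := by rw [hKdef]; positivity
  clear_value K
  set δ := min δ₁ (min (Real.sqrt (1 / D)) (Real.sqrt (24 * e / (5 * D ^ 2)))) with hδdef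
  have hδ0 : 0 < δ := by
    refine lt_min hδ₁ (lt_min ?_ ?_) <;> exact Real.sqrt_pos.2 (by positivity)
  refine ⟨δ, hδ0, lam / Real.sqrt K, ?_⟩
  intro τ hτ
  have hτ0 : 0 < τ := hτ.1
  have hτδ₁ : τ ≤ δ₁ := le_trans hτ.2 (min_le_left _ _)
  have hτs1 : τ ≤ Real.sqrt (1 / D) :=
    le_trans hτ.2 (le_trans (min_le_right _ _) (min_le_left _ _))
  have hτs2 : τ ≤ Real.sqrt (24 * e / (5 * D ^ 2)) :=
    le_trans hτ.2 (le_trans (min_le_right _ _) (min_le_right _ _))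
  have hτ21 : τ ^ 2 ≤ 1 / D := by
    have h := pow_le_pow_left₀ hτ0.le hτs1 2
    rwa [Real.sq_sqrt (by positivity : (0:ℝ) ≤ 1 / D)] at h
  have hDτ : D * τ ^ 2 ≤ 1 := by
    rw [le_div_iff₀ hD0] at hτ21; linarith
  have hτ22 : τ ^ 2 ≤ 24 * e / (5 * D ^ 2) := by
    have h := pow_le_pow_left₀ hτ0.le hτs2 2
    rwa [Real.sq_sqrt (by positivity : (0:ℝ) ≤ 24 * e / (5 * D ^ 2))] at h
  have h5 : 5 / 96 * D ^ 2 * τ ^ 2 ≤ e / 4 := by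
    rw [le_div_iff₀ (by positivity : (0:ℝ) < 5 * D ^ 2)] at hτ22
    linarith
  obtain ⟨hP, hσ⟩ := hδ₁p τ ⟨hτ0, hτδ₁⟩
  have hr2'' : deriv (deriv (specCorr μ)) 0 = -lam := by
    rw [hlam]; exact deriv2_specCorr_zero μ hlam2fin
  have hr' : deriv (specCorr μ) τ = ∫ l : ℝ, -(l * Real.sin (l * τ)) ∂μ :=
    (specCorr_hasDerivAt μ hlam2fin τ).deriv
  have hlamnn : 0 ≤ lam := hlam2pos.le
  -- integrability pack
  have hmcos : Continuous fun l : ℝ => Real.cos (l * τ) :=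
    Real.continuous_cos.comp (continuous_id.mul continuous_const)
  have hmsin : Continuous fun l : ℝ => Real.sin (l * τ) :=
    Real.continuous_sin.comp (continuous_id.mul continuous_const)
  have hIcos : Integrable (fun l : ℝ => Real.cos (l * τ)) μ :=
    (integrable_const 1).mono' hmcos.aestronglyMeasurable
      (Filter.Eventually.of_forall fun l => by
        rw [Real.norm_eq_abs]; exact Real.abs_cos_le_one _)
  have hIsin2 : Integrable (fun l : ℝ => Real.sin (l * τ) ^ 2) μ :=
    (integrable_const 1).mono' ((hmsin.pow 2).aestronglyMeasurable)
      (Filter.Eventually.of_forall fun l => by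
        rw [Real.norm_eq_abs, abs_of_nonneg (sq_nonneg _)]
        nlinarith [Real.abs_sin_le_one (l * τ), abs_nonneg (Real.sin (l * τ)), sq_abs (Real.sin (l*τ))])
  have hIcos2 : Integrable (fun l : ℝ => Real.cos (l * τ) ^ 2) μ :=
    (integrable_const 1).mono' ((hmcos.pow 2).aestronglyMeasurable)
      (Filter.Eventually.of_forall fun l => by
        rw [Real.norm_eq_abs, abs_of_nonneg (sq_nonneg _)]
        nlinarith [Real.abs_cos_le_one (l * τ), abs_nonneg (Real.cos (l * τ)), sq_abs (Real.cos (l*τ))])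
  have hIlsin : Integrable (fun l : ℝ => l * Real.sin (l * τ)) μ :=
    (integrable_abs_id μ hlam2fin).mono' (continuous_id.mul hmsin).aestronglyMeasurable
      (Filter.Eventually.of_forall fun l => by
        rw [Real.norm_eq_abs, abs_mul]
        calc |l| * |Real.sin (l * τ)| ≤ |l| * 1 :=
              mul_le_mul_of_nonneg_left (Real.abs_sin_le_one _) (abs_nonneg l)
          _ = |l| := mul_one _)
  -- |r'| ≤ lam * τ
  have habs : |deriv (specCorr μ) τ| ≤ lam * τ := by
    rw [hr', ← Real.norm_eq_abs]
    calc ‖∫ l : ℝ, -(l * Real.sin (l * τ)) ∂μ‖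
        ≤ ∫ l : ℝ, ‖-(l * Real.sin (l * τ))‖ ∂μ := norm_integral_le_integral_norm _
      _ ≤ ∫ l : ℝ, l ^ 2 * τ ∂μ := by
          refine integral_mono hIlsin.neg.norm (hlam2fin.mul_const τ) fun l => ?_
          rw [norm_neg, Real.norm_eq_abs, abs_mul]
          calc |l| * |Real.sin (l * τ)| ≤ |l| * |l * τ| :=
                mul_le_mul_of_nonneg_left Real.abs_sin_le_abs (abs_nonneg l)
            _ = l ^ 2 * τ := by
                rw [abs_mul, abs_of_pos hτ0, ← mul_assoc, ← sq_abs l]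
                ring
      _ = lam * τ := by rw [integral_mul_const, hlam]
  -- 1 - r² ≤ lam τ²
  have hrle : specCorr μ τ ≤ 1 := by
    have h := integral_mono hIcos (integrable_const 1) fun l => Real.cos_le_one (l * τ)
    simpa [specCorr] using h
  have hrge : 1 - lam * (τ ^ 2 / 2) ≤ specCorr μ τ := by
    have hint : Integrable (fun l : ℝ => 1 - l ^ 2 * (τ ^ 2 / 2)) μ :=
      (integrable_const 1).sub (hlam2fin.mul_const (τ ^ 2 / 2))
    have h : (∫ l : ℝ, (1 - l ^ 2 * (τ ^ 2 / 2)) ∂μ) ≤ specCorr μ τ := by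
      refine integral_mono hint hIcos fun l => ?_
      have h1 : 1 - (l * τ) ^ 2 / 2 ≤ Real.cos (l * τ) := Real.one_sub_sq_div_two_le_cos
      calc (1:ℝ) - l ^ 2 * (τ ^ 2 / 2) = 1 - (l * τ) ^ 2 / 2 := by ring
        _ ≤ Real.cos (l * τ) := h1
    rw [integral_sub (integrable_const 1) (hlam2fin.mul_const (τ ^ 2 / 2)),
      integral_mul_const, integral_const, ← hlam] at h
    simpa using h
  have hP2 : 1 - specCorr μ τ ^ 2 ≤ lam * τ ^ 2 := by
    have hsq : (1 - specCorr μ τ) ^ 2 = 1 - 2 * specCorr μ τ + specCorr μ τ ^ 2 := by ring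
    linarith [sq_nonneg (1 - specCorr μ τ), hsq, hrge]
  -- Pythagoras
  have hpyth : (∫ l : ℝ, Real.sin (l * τ) ^ 2 ∂μ) + (∫ l : ℝ, Real.cos (l * τ) ^ 2 ∂μ) = 1 := by
    rw [← integral_add hIsin2 hIcos2]
    simp [Real.sin_sq_add_cos_sq]
  -- Cauchy–Schwarz
  have hcs : (∫ l : ℝ, l * Real.sin (l * τ) ∂μ) ^ 2 ≤ lam * ∫ l : ℝ, Real.sin (l * τ) ^ 2 ∂μ := by
    rw [hlam]
    exact integral_cauchy_schwarz (fun l => l) (fun l => Real.sin (l * τ)) hlam2fin hIsin2 hIlsin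
  set a := specCorr μ τ with hadef
  clear_value a
  set Q := ∫ l : ℝ, Real.cos (l * τ) ^ 2 ∂μ with hQdef
  clear_value Q
  set V := Q - a ^ 2 with hVdef
  clear_value V
  have hVint : Integrable (fun l : ℝ => (Real.cos (l * τ) - a) ^ 2) μ := by
    refine (integrable_const ((1 + |a|) ^ 2)).mono'
      (((hmcos.sub continuous_const).pow 2).aestronglyMeasurable)
      (Filter.Eventually.of_forall fun l => ?_)
    rw [Real.norm_eq_abs, abs_of_nonneg (sq_nonneg _)]
    have hfac : (1 + |a|) ^ 2 - (Real.cos (l * τ) - a) ^ 2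
        = (1 + |a| - Real.cos (l * τ) + a) * (1 + |a| + Real.cos (l * τ) - a) := by ring
    have hprod : (0:ℝ) ≤ (1 + |a| - Real.cos (l * τ) + a) * (1 + |a| + Real.cos (l * τ) - a) :=
      mul_nonneg
        (by linarith [Real.cos_le_one (l * τ), neg_abs_le a])
        (by linarith [Real.neg_one_le_cos (l * τ), le_abs_self a])
    linarith [hfac, hprod]
  have hVid : ∫ l : ℝ, (Real.cos (l * τ) - a) ^ 2 ∂μ = V := by
    have hexp : (fun l : ℝ => (Real.cos (l * τ) - a) ^ 2)
        = fun l : ℝ => (Real.cos (l * τ) ^ 2 - 2 * a * Real.cos (l * τ)) + a ^ 2 := by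
      funext l; ring
    have hsub : Integrable (fun l : ℝ => Real.cos (l * τ) ^ 2 - 2 * a * Real.cos (l * τ)) μ :=
      hIcos2.sub (hIcos.const_mul _)
    rw [hexp, integral_add hsub (integrable_const _),
      integral_sub hIcos2 (hIcos.const_mul _), integral_const_mul, integral_const]
    have hra : ∫ l : ℝ, Real.cos (l * τ) ∂μ = a := by rw [hadef]; rfl
    rw [hra, measureReal_def, measure_univ]
    simp only [ENNReal.toReal_one, one_smul]
    rw [← hQdef, hVdef]
    ring
  -- pointwise bounds on S and T
  set u := 1 - c * τ ^ 2 / 2 with hudef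
  clear_value u
  set v := 1 - d * τ ^ 2 / 2 + D ^ 2 * τ ^ 4 * (5 / 96) with hvdef
  clear_value v
  have hu : ∀ l ∈ S, u ≤ Real.cos (l * τ) := by
    intro l hl
    have hl2 : l ^ 2 ≤ c := hl
    have h1 : 1 - (l * τ) ^ 2 / 2 ≤ Real.cos (l * τ) := Real.one_sub_sq_div_two_le_cos
    have h2 : (l * τ) ^ 2 ≤ c * τ ^ 2 := by
      rw [mul_pow]; exact mul_le_mul_of_nonneg_right hl2 (sq_nonneg τ)
    simp only [hudef]; linarith
  have hv : ∀ l ∈ T, Real.cos (l * τ) ≤ v := by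
    intro l hl
    obtain ⟨hld, hlD⟩ := hl
    have habs1 : |l * τ| ≤ 1 := by
      have h2 : (l * τ) ^ 2 ≤ 1 := by
        rw [mul_pow]
        linarith [mul_le_mul_of_nonneg_right hlD (sq_nonneg τ), hDτ]
      calc |l * τ| = Real.sqrt ((l * τ) ^ 2) := (Real.sqrt_sq_eq_abs _).symm
        _ ≤ Real.sqrt 1 := Real.sqrt_le_sqrt h2
        _ = 1 := Real.sqrt_one
    have hb := abs_le.1 (Real.cos_bound habs1)
    have h1 : Real.cos (l * τ) ≤ 1 - (l * τ) ^ 2 / 2 + |l * τ| ^ 4 * (5 / 96) := by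
      linarith [hb.2]
    have h2 : |l * τ| ^ 4 = (l ^ 2 * τ ^ 2) ^ 2 := by
      rw [show (4:ℕ) = 2 * 2 from rfl, pow_mul, sq_abs, mul_pow]
    have h3 : (l ^ 2 * τ ^ 2) ^ 2 ≤ D ^ 2 * τ ^ 4 := by
      have hle : l ^ 2 * τ ^ 2 ≤ D * τ ^ 2 := mul_le_mul_of_nonneg_right hlD (sq_nonneg τ)
      calc (l ^ 2 * τ ^ 2) ^ 2 ≤ (D * τ ^ 2) ^ 2 :=
            pow_le_pow_left₀ (mul_nonneg (sq_nonneg l) (sq_nonneg τ)) hle 2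
        _ = D ^ 2 * τ ^ 4 := by ring
    have h4 : d * τ ^ 2 ≤ (l * τ) ^ 2 := by
      rw [mul_pow]; exact mul_le_mul_of_nonneg_right hld (sq_nonneg τ)
    simp only [hvdef]
    linarith [h1, h2 ▸ h3]
  have hgap : e * τ ^ 2 / 4 ≤ u - v := by
    have h6 := mul_le_mul_of_nonneg_right h5 (sq_nonneg τ)
    have h7 : e * τ ^ 2 = d * τ ^ 2 - c * τ ^ 2 := by rw [he]; ring
    simp only [hudef, hvdef]
    linarith [h6, h7]
  -- variance lower bound
  have hVlb : K * τ ^ 4 ≤ V := by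
    rw [← hVid]
    have key : ∃ W : Set ℝ, MeasurableSet W ∧ m ≤ (μ W).toReal ∧
        ∀ l ∈ W, (e * τ ^ 2 / 8) ^ 2 ≤ (Real.cos (l * τ) - a) ^ 2 := by
      rcases le_or_gt a ((u + v) / 2) with hcase | hcase
      · refine ⟨S, hSm, by rw [hmdef]; exact min_le_left _ _, fun l hl => ?_⟩
        have h1 := hu l hl
        have hx : e * τ ^ 2 / 8 ≤ Real.cos (l * τ) - a := by linarith [hgap]
        exact pow_le_pow_left₀ (by positivity) hx 2
      · refine ⟨T, hTm, by rw [hmdef]; exact min_le_right _ _, fun l hl => ?_⟩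
        have h1 := hv l hl
        have hx : e * τ ^ 2 / 8 ≤ a - Real.cos (l * τ) := by linarith [hgap]
        have h2 := pow_le_pow_left₀ (by positivity : (0:ℝ) ≤ e * τ ^ 2 / 8) hx 2
        calc (e * τ ^ 2 / 8) ^ 2 ≤ (a - Real.cos (l * τ)) ^ 2 := h2
          _ = (Real.cos (l * τ) - a) ^ 2 := by ring
    obtain ⟨W, hWm, hWge, hWlb⟩ := key
    have h1 : (e * τ ^ 2 / 8) ^ 2 * (μ W).toReal ≤ ∫ l in W, (Real.cos (l * τ) - a) ^ 2 ∂μ :=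
      setIntegral_ge_of_const_le_real hWm (measure_ne_top μ W) hWlb hVint.integrableOn
    have h2 : (∫ l in W, (Real.cos (l * τ) - a) ^ 2 ∂μ) ≤ ∫ l : ℝ, (Real.cos (l * τ) - a) ^ 2 ∂μ :=
      setIntegral_le_integral hVint (Filter.Eventually.of_forall fun l => sq_nonneg _)
    calc K * τ ^ 4 = (e * τ ^ 2 / 8) ^ 2 * m := by rw [hKdef]; ring
      _ ≤ (e * τ ^ 2 / 8) ^ 2 * (μ W).toReal := mul_le_mul_of_nonneg_left hWge (sq_nonneg _)
      _ ≤ ∫ l in W, (Real.cos (l * τ) - a) ^ 2 ∂μ := h1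
      _ ≤ _ := h2
  have hV0 : 0 < V := lt_of_lt_of_le (by positivity) hVlb
  -- sigma² lower bound
  have hσlb : K * τ ^ 2 ≤ sigmaSq μ τ := by
    have hIsin_eq : ∫ l : ℝ, Real.sin (l * τ) ^ 2 ∂μ = (1 - a ^ 2) - V := by
      rw [hVdef]
      linarith [hpyth]
    have hr'sq : (deriv (specCorr μ) τ) ^ 2 ≤ lam * ((1 - a ^ 2) - V) := by
      rw [hr', integral_neg, neg_sq, ← hIsin_eq]
      exact hcs
    have hstep1 : (deriv (specCorr μ) τ) ^ 2 / (1 - a ^ 2) ≤ lam * ((1 - a ^ 2) - V) / (1 - a ^ 2) :=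
      by gcongr
    have hstep2 : lam - lam * ((1 - a ^ 2) - V) / (1 - a ^ 2) = lam * V / (1 - a ^ 2) := by
      field_simp
      ring
    have hstep3 : lam * V / (lam * τ ^ 2) ≤ lam * V / (1 - a ^ 2) :=
      div_le_div_of_nonneg_left (by positivity) hP hP2
    have hstep4 : lam * V / (lam * τ ^ 2) = V / τ ^ 2 :=
      mul_div_mul_left V (τ ^ 2) hlam2pos.ne'
    have hstep5 : K * τ ^ 2 ≤ V / τ ^ 2 := by
      rw [le_div_iff₀ (by positivity : (0:ℝ) < τ ^ 2)]
      calc K * τ ^ 2 * τ ^ 2 = K * τ ^ 4 := by ring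
        _ ≤ V := hVlb
    have hsig : sigmaSq μ τ = lam - (deriv (specCorr μ) τ) ^ 2 / (1 - a ^ 2) := by
      rw [sigmaSq, hr2'', neg_neg, ← hadef]
    rw [hsig]
    linarith [hstep1, hstep2 ▸ hstep3.trans_eq rfl, hstep4 ▸ hstep5]
  -- conclude
  have hsqrt : Real.sqrt K * τ ≤ Real.sqrt (sigmaSq μ τ) := by
    have h := Real.sqrt_le_sqrt hσlb
    rwa [Real.sqrt_mul hK0.le, Real.sqrt_sq hτ0.le] at h
  have hden : 0 < Real.sqrt K * τ := mul_pos (Real.sqrt_pos.2 hK0) hτ0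
  calc |deriv (specCorr μ) τ| / Real.sqrt (sigmaSq μ τ)
      ≤ (lam * τ) / (Real.sqrt K * τ) :=
        div_le_div₀ (by positivity) habs hden hsqrt
    _ = lam / Real.sqrt K := mul_div_mul_right _ _ hτ0.ne'
end

section
/- For δ > 0 small enough, the integral ∫₀^δ σ²(τ)/√(1 − r²(τ)) dτ is finite if and only if ∫₀^δ L(τ) dτ is finite (the Geman condition). -/
open MeasureTheory ProbabilityTheory Set Filter Topology Real
open scoped ENNReal NNReal

namespace KLaux

variable {μ : MeasureTheory.Measure ℝ} [IsProbabilityMeasure μ]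

lemma abs_le_one_add_sq (l : ℝ) : |l| ≤ 1 + l ^ 2 := by
  nlinarith [sq_nonneg (|l| - 1), sq_abs l, abs_nonneg l]

lemma integrable_abs (h2 : Integrable (fun l : ℝ => l ^ 2) μ) :
    Integrable (fun l : ℝ => |l|) μ := by
  refine ((integrable_const (1:ℝ)).add h2).mono'
    (continuous_abs.aestronglyMeasurable) (ae_of_all _ fun l => ?_)
  rw [Real.norm_eq_abs, abs_abs]
  exact (abs_le_one_add_sq l).trans (by simp [sq_abs, abs_nonneg, abs_of_nonneg (sq_nonneg l)])

lemma integrable_sin_term (h2 : Integrable (fun l : ℝ => l ^ 2) μ) (τ : ℝ) :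
    Integrable (fun l : ℝ => -(l * Real.sin (l * τ))) μ := by
  refine (integrable_abs h2).mono'
    ((by fun_prop : Continuous fun l : ℝ => -(l * Real.sin (l * τ))).aestronglyMeasurable)
    (ae_of_all _ fun l => ?_)
  rw [Real.norm_eq_abs, abs_neg, abs_mul]
  calc |l| * |Real.sin (l * τ)| ≤ |l| * 1 :=
        mul_le_mul_of_nonneg_left (Real.abs_sin_le_one _) (abs_nonneg l)
    _ = |l| := mul_one _

lemma integrable_cos_term (h2 : Integrable (fun l : ℝ => l ^ 2) μ) (τ : ℝ) :
    Integrable (fun l : ℝ => -(l ^ 2 * Real.cos (l * τ))) μ := by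
  refine h2.mono'
    ((by fun_prop : Continuous fun l : ℝ => -(l ^ 2 * Real.cos (l * τ))).aestronglyMeasurable)
    (ae_of_all _ fun l => ?_)
  rw [Real.norm_eq_abs, abs_neg, abs_mul]
  calc |l ^ 2| * |Real.cos (l * τ)| ≤ |l ^ 2| * 1 :=
        mul_le_mul_of_nonneg_left (Real.abs_cos_le_one _) (abs_nonneg _)
    _ = l ^ 2 := by rw [mul_one, abs_of_nonneg (sq_nonneg l)]

lemma hasDerivAt_specCorr (h2 : Integrable (fun l : ℝ => l ^ 2) μ) (τ : ℝ) :
    HasDerivAt (specCorr μ) (∫ l, -(l * Real.sin (l * τ)) ∂μ) τ := by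
  have key := hasDerivAt_integral_of_dominated_loc_of_deriv_le
    (μ := μ) (F := fun x l => Real.cos (l * x))
    (F' := fun x l => -(l * Real.sin (l * x))) (x₀ := τ) (bound := fun l => |l|)
    (s := Metric.ball τ 1) (Metric.ball_mem_nhds τ one_pos)
    (Eventually.of_forall fun x => (by fun_prop : Continuous fun l : ℝ => Real.cos (l * x)).aestronglyMeasurable)
    ?_ ((by fun_prop : Continuous fun l : ℝ => -(l * Real.sin (l * τ))).aestronglyMeasurable)
    ?_ (integrable_abs h2) ?_
  · exact key.2
  · refine (integrable_const (1:ℝ)).mono'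
      ((by fun_prop : Continuous fun l : ℝ => Real.cos (l * τ)).aestronglyMeasurable)
      (ae_of_all _ fun l => ?_)
    simpa [Real.norm_eq_abs] using Real.abs_cos_le_one (l * τ)
  · refine ae_of_all _ fun l x _ => ?_
    rw [Real.norm_eq_abs, abs_neg, abs_mul]
    calc |l| * |Real.sin (l * x)| ≤ |l| * 1 :=
          mul_le_mul_of_nonneg_left (Real.abs_sin_le_one _) (abs_nonneg l)
      _ = |l| := mul_one _
  · refine ae_of_all _ fun l x _ => ?_
    have h1 : HasDerivAt (fun x : ℝ => l * x) l x := by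
      simpa using (hasDerivAt_id x).const_mul l
    have := (Real.hasDerivAt_cos (l * x)).comp x h1
    exact this.congr_deriv (by ring)


lemma deriv_specCorr (h2 : Integrable (fun l : ℝ => l ^ 2) μ) :
    deriv (specCorr μ) = fun τ => ∫ l, -(l * Real.sin (l * τ)) ∂μ :=
  funext fun τ => (hasDerivAt_specCorr h2 τ).deriv

lemma hasDerivAt_deriv_specCorr (h2 : Integrable (fun l : ℝ => l ^ 2) μ) (τ : ℝ) :
    HasDerivAt (deriv (specCorr μ)) (∫ l, -(l ^ 2 * Real.cos (l * τ)) ∂μ) τ := by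
  rw [deriv_specCorr h2]
  have key := hasDerivAt_integral_of_dominated_loc_of_deriv_le
    (μ := μ) (F := fun x l => -(l * Real.sin (l * x)))
    (F' := fun x l => -(l ^ 2 * Real.cos (l * x))) (x₀ := τ) (bound := fun l => l ^ 2)
    (s := Metric.ball τ 1) (Metric.ball_mem_nhds τ one_pos)
    (Eventually.of_forall fun x =>
      ((by fun_prop : Continuous fun l : ℝ => -(l * Real.sin (l * x))).aestronglyMeasurable))
    (integrable_sin_term h2 τ)
    ((by fun_prop : Continuous fun l : ℝ => -(l ^ 2 * Real.cos (l * τ))).aestronglyMeasurable)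
    ?_ h2 ?_
  · exact key.2
  · refine ae_of_all _ fun l x _ => ?_
    rw [Real.norm_eq_abs, abs_neg, abs_mul]
    calc |l ^ 2| * |Real.cos (l * x)| ≤ |l ^ 2| * 1 :=
          mul_le_mul_of_nonneg_left (Real.abs_cos_le_one _) (abs_nonneg _)
      _ = l ^ 2 := by rw [mul_one, abs_of_nonneg (sq_nonneg l)]
  · refine ae_of_all _ fun l x _ => ?_
    have h1 : HasDerivAt (fun x : ℝ => l * x) l x := by
      simpa using (hasDerivAt_id x).const_mul l
    have := ((Real.hasDerivAt_sin (l * x)).comp x h1).const_mul l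
    have := this.neg
    exact this.congr_deriv (by ring)

lemma deriv2_specCorr (h2 : Integrable (fun l : ℝ => l ^ 2) μ) :
    deriv (deriv (specCorr μ)) = fun τ => ∫ l, -(l ^ 2 * Real.cos (l * τ)) ∂μ :=
  funext fun τ => (hasDerivAt_deriv_specCorr h2 τ).deriv

lemma specCorr_zero : specCorr μ 0 = 1 := by
  simp [specCorr]

lemma specCorr_le_one (τ : ℝ) : specCorr μ τ ≤ 1 := by
  have : ∫ l : ℝ, Real.cos (l * τ) ∂μ ≤ ∫ _ : ℝ, (1:ℝ) ∂μ := by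
    refine integral_mono ?_ (integrable_const 1) fun l => Real.cos_le_one _
    refine (integrable_const (1:ℝ)).mono'
      ((by fun_prop : Continuous fun l : ℝ => Real.cos (l * τ)).aestronglyMeasurable)
      (ae_of_all _ fun l => by simpa [Real.norm_eq_abs] using Real.abs_cos_le_one (l * τ))
  simpa [specCorr] using this

lemma deriv2_specCorr_zero (h2 : Integrable (fun l : ℝ => l ^ 2) μ) :
    deriv (deriv (specCorr μ)) 0 = -∫ l : ℝ, l ^ 2 ∂μ := by
  rw [deriv2_specCorr h2]
  simp [integral_neg]

lemma continuous_specCorr (h2 : Integrable (fun l : ℝ => l ^ 2) μ) :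
    Continuous (specCorr μ) :=
  continuous_iff_continuousAt.2 fun τ => (hasDerivAt_specCorr h2 τ).continuousAt

lemma continuous_deriv_specCorr (h2 : Integrable (fun l : ℝ => l ^ 2) μ) :
    Continuous (deriv (specCorr μ)) :=
  continuous_iff_continuousAt.2 fun τ => (hasDerivAt_deriv_specCorr h2 τ).continuousAt

lemma continuous_deriv2_specCorr (h2 : Integrable (fun l : ℝ => l ^ 2) μ) :
    Continuous (deriv (deriv (specCorr μ))) := by
  rw [deriv2_specCorr h2]
  refine continuous_of_dominated ?_ (fun x => ae_of_all _ fun l => ?_) h2 ?_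
  · exact fun x =>
      ((by fun_prop : Continuous fun l : ℝ => -(l ^ 2 * Real.cos (l * x))).aestronglyMeasurable)
  · rw [Real.norm_eq_abs, abs_neg, abs_mul]
    calc |l ^ 2| * |Real.cos (l * x)| ≤ |l ^ 2| * 1 :=
          mul_le_mul_of_nonneg_left (Real.abs_cos_le_one _) (abs_nonneg _)
      _ = l ^ 2 := by rw [mul_one, abs_of_nonneg (sq_nonneg l)]
  · exact ae_of_all _ fun l => by fun_prop


/-- `K τ = r''(τ) - r''(0) = ∫ l²(1-cos(lτ)) dμ ≥ 0`. -/
noncomputable def Kf (μ : MeasureTheory.Measure ℝ) : ℝ → ℝ :=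
  fun τ => (∫ l : ℝ, l ^ 2 ∂μ) + deriv (deriv (specCorr μ)) τ

/-- `θ'(τ) = r'(τ) + λ₂ τ`. -/
noncomputable def tp (μ : MeasureTheory.Measure ℝ) : ℝ → ℝ :=
  fun τ => deriv (specCorr μ) τ + (∫ l : ℝ, l ^ 2 ∂μ) * τ

/-- `θ(τ) = r(τ) - 1 + λ₂ τ²/2`. -/
noncomputable def th (μ : MeasureTheory.Measure ℝ) : ℝ → ℝ :=
  fun τ => specCorr μ τ - 1 + (∫ l : ℝ, l ^ 2 ∂μ) * τ ^ 2 / 2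

/-- `M(τ) = τ θ'(τ) - θ(τ)`. -/
noncomputable def Mf (μ : MeasureTheory.Measure ℝ) : ℝ → ℝ :=
  fun τ => τ * tp μ τ - th μ τ

lemma Kf_nonneg (h2 : Integrable (fun l : ℝ => l ^ 2) μ) (τ : ℝ) : 0 ≤ Kf μ τ := by
  have : Kf μ τ = ∫ l : ℝ, (l ^ 2 + -(l ^ 2 * Real.cos (l * τ))) ∂μ := by
    rw [Kf, deriv2_specCorr h2, integral_add h2 (integrable_cos_term h2 τ)]
  rw [this]
  refine integral_nonneg fun l => ?_
  show (0:ℝ) ≤ l ^ 2 + -(l ^ 2 * Real.cos (l * τ))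
  have := Real.cos_le_one (l * τ)
  nlinarith [sq_nonneg l]

lemma Kf_zero (h2 : Integrable (fun l : ℝ => l ^ 2) μ) : Kf μ 0 = 0 := by
  rw [Kf, deriv2_specCorr_zero h2]; ring

lemma continuous_Kf (h2 : Integrable (fun l : ℝ => l ^ 2) μ) : Continuous (Kf μ) :=
  continuous_const.add (continuous_deriv2_specCorr h2)

lemma hasDerivAt_th (h2 : Integrable (fun l : ℝ => l ^ 2) μ) (τ : ℝ) :
    HasDerivAt (th μ) (tp μ τ) τ := by
  have h1 : HasDerivAt (specCorr μ) (deriv (specCorr μ) τ) τ :=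
    (hasDerivAt_specCorr h2 τ).deriv ▸ hasDerivAt_specCorr h2 τ
  have h3 : HasDerivAt (fun t : ℝ => (∫ l : ℝ, l ^ 2 ∂μ) * t ^ 2 / 2)
      ((∫ l : ℝ, l ^ 2 ∂μ) * τ) τ := by
    have := ((hasDerivAt_pow 2 τ).const_mul (∫ l : ℝ, l ^ 2 ∂μ)).div_const 2
    exact this.congr_deriv (by ring)
  have := (h1.sub_const 1).add h3
  exact this

lemma hasDerivAt_tp (h2 : Integrable (fun l : ℝ => l ^ 2) μ) (τ : ℝ) :
    HasDerivAt (tp μ) (Kf μ τ) τ := by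
  have h1 : HasDerivAt (deriv (specCorr μ)) (deriv (deriv (specCorr μ)) τ) τ :=
    (hasDerivAt_deriv_specCorr h2 τ).deriv ▸ hasDerivAt_deriv_specCorr h2 τ
  have h3 : HasDerivAt (fun t : ℝ => (∫ l : ℝ, l ^ 2 ∂μ) * t) (∫ l : ℝ, l ^ 2 ∂μ) τ := by
    simpa using (hasDerivAt_id τ).const_mul (∫ l : ℝ, l ^ 2 ∂μ)
  have := h1.add h3
  exact this.congr_deriv (by unfold Kf; ring)

lemma hasDerivAt_Mf (h2 : Integrable (fun l : ℝ => l ^ 2) μ) (τ : ℝ) :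
    HasDerivAt (Mf μ) (τ * Kf μ τ) τ := by
  have := ((hasDerivAt_id τ).mul (hasDerivAt_tp h2 τ)).sub (hasDerivAt_th h2 τ)
  exact this.congr_deriv (by change 1 * tp μ τ + τ * Kf μ τ - tp μ τ = τ * Kf μ τ; ring)

lemma tp_zero (h2 : Integrable (fun l : ℝ => l ^ 2) μ) : tp μ 0 = 0 := by
  rw [tp, deriv_specCorr h2]; simp

lemma th_zero : th μ 0 = 0 := by
  rw [th, specCorr_zero]; ring

lemma Mf_zero (h2 : Integrable (fun l : ℝ => l ^ 2) μ) : Mf μ 0 = 0 := by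
  rw [Mf, th_zero, tp_zero h2]; ring

/-- If `g 0 = 0` and `g' ≥ 0` on `[0, δ]` then `g ≥ 0` there. -/
lemma nonneg_of_hasDerivAt {g g' : ℝ → ℝ} (hg : ∀ t, HasDerivAt g (g' t) t)
    (h0 : g 0 = 0) {δ : ℝ} (h' : ∀ t ∈ Icc (0:ℝ) δ, 0 ≤ g' t) {τ : ℝ}
    (hτ : τ ∈ Icc (0:ℝ) δ) : 0 ≤ g τ := by
  have hmono : MonotoneOn g (Icc (0:ℝ) δ) := by
    refine monotoneOn_of_deriv_nonneg (convex_Icc 0 δ)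
      (fun x _ => (hg x).differentiableAt.continuousAt.continuousWithinAt)
      (fun x hx => (hg x).differentiableAt.differentiableWithinAt) (fun x hx => ?_)
    rw [(hg x).deriv]
    exact h' x (interior_subset hx)
  have h0mem : (0:ℝ) ∈ Icc (0:ℝ) δ := ⟨le_refl 0, hτ.1.trans hτ.2⟩
  calc (0:ℝ) = g 0 := h0.symm
    _ ≤ g τ := hmono h0mem hτ hτ.1


lemma continuousOn_Kf_div {a b : ℝ} (h2 : Integrable (fun l : ℝ => l ^ 2) μ) (ha : 0 < a) :
    ContinuousOn (fun t => Kf μ t / t / 2 - Mf μ t / t ^ 3) (Icc a b) := by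
  have hM : Continuous (Mf μ) := by
    refine continuous_iff_continuousAt.2 fun τ => (hasDerivAt_Mf h2 τ).differentiableAt.continuousAt
  refine ContinuousOn.sub (ContinuousOn.div
      (ContinuousOn.div ((continuous_Kf h2).continuousOn) ?_ ?_) continuousOn_const
      (fun t ht => two_ne_zero))
    (ContinuousOn.div hM.continuousOn ?_ ?_)
  · fun_prop
  · intro t ht; have := ha.trans_le ht.1; positivity
  · fun_prop
  · intro t ht; have := ha.trans_le ht.1; positivity

/-- FTC identity: `∫ₐᵇ (L/2 − M/t³) = Φ(b) − Φ(a)` with `Φ(t) = M(t)/(2t²)`. -/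
lemma ID1 (h2 : Integrable (fun l : ℝ => l ^ 2) μ) {a b : ℝ} (ha : 0 < a) (hab : a ≤ b) :
    ∫ t in a..b, (Kf μ t / t / 2 - Mf μ t / t ^ 3)
      = Mf μ b / (2 * b ^ 2) - Mf μ a / (2 * a ^ 2) := by
  refine intervalIntegral.integral_eq_sub_of_hasDerivAt
    (f := fun t => Mf μ t / (2 * t ^ 2)) (fun t ht => ?_) ?_
  · rw [Set.uIcc_of_le hab] at ht
    have ht0 : 0 < t := ha.trans_le ht.1
    have hd : HasDerivAt (fun t => Mf μ t / (2 * t ^ 2))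
        ((t * Kf μ t * (2 * t ^ 2) - Mf μ t * (2 * (2 * t))) / (2 * t ^ 2) ^ 2) t := by
      exact (hasDerivAt_Mf h2 t).div
        (((hasDerivAt_pow 2 t).const_mul 2).congr_deriv (by ring)) (by positivity)
    refine hd.congr_deriv ?_
    field_simp
  · exact ContinuousOn.intervalIntegrable_of_Icc hab (continuousOn_Kf_div h2 ha)

lemma continuousOn_tp_div {a b : ℝ} (h2 : Integrable (fun l : ℝ => l ^ 2) μ) (ha : 0 < a) :
    ContinuousOn (fun t => tp μ t / t * (Kf μ t / t) - (tp μ t) ^ 2 / t ^ 3) (Icc a b) := by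
  have htp : Continuous (tp μ) :=
    continuous_iff_continuousAt.2 fun τ => (hasDerivAt_tp h2 τ).differentiableAt.continuousAt
  refine ContinuousOn.sub (ContinuousOn.mul
      (ContinuousOn.div htp.continuousOn ?_ ?_)
      (ContinuousOn.div (continuous_Kf h2).continuousOn ?_ ?_))
    (ContinuousOn.div (htp.pow 2).continuousOn ?_ ?_)
  · fun_prop
  · intro t ht; have := ha.trans_le ht.1; positivity
  · fun_prop
  · intro t ht; have := ha.trans_le ht.1; positivity
  · fun_prop
  · intro t ht; have := ha.trans_le ht.1; positivity

/-- FTC identity: `∫ₐᵇ (θ'K/t² − θ'²/t³) = Ψ(b) − Ψ(a)` with `Ψ(t) = θ'(t)²/(2t²)`. -/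
lemma ID2 (h2 : Integrable (fun l : ℝ => l ^ 2) μ) {a b : ℝ} (ha : 0 < a) (hab : a ≤ b) :
    ∫ t in a..b, (tp μ t / t * (Kf μ t / t) - (tp μ t) ^ 2 / t ^ 3)
      = (tp μ b) ^ 2 / (2 * b ^ 2) - (tp μ a) ^ 2 / (2 * a ^ 2) := by
  refine intervalIntegral.integral_eq_sub_of_hasDerivAt
    (f := fun t => (tp μ t) ^ 2 / (2 * t ^ 2)) (fun t ht => ?_) ?_
  · rw [Set.uIcc_of_le hab] at ht
    have ht0 : 0 < t := ha.trans_le ht.1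
    have hd : HasDerivAt (fun t => (tp μ t) ^ 2 / (2 * t ^ 2))
        ((2 * tp μ t * Kf μ t * (2 * t ^ 2) - (tp μ t) ^ 2 * (2 * (2 * t))) / (2 * t ^ 2) ^ 2)
        t := by
      refine HasDerivAt.div ?_ (((hasDerivAt_pow 2 t).const_mul 2).congr_deriv (by ring))
        (by positivity)
      have := (hasDerivAt_tp h2 t).pow 2
      exact this.congr_deriv (by ring)
    refine hd.congr_deriv ?_
    field_simp
  · exact ContinuousOn.intervalIntegrable_of_Icc hab (continuousOn_tp_div h2 ha)


/-- A function whose integrals over `Ioc a δ` are uniformly bounded is integrable on `Ioc 0 δ`. -/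
lemma integrableOn_Ioc_of_bound {g : ℝ → ℝ} {δ C : ℝ} (hδ : 0 < δ)
    (hint : ∀ a : ℝ, 0 < a → a < δ → IntegrableOn g (Ioc a δ) volume)
    (hbd : ∀ a : ℝ, 0 < a → a < δ → (∫ x in Ioc a δ, ‖g x‖) ≤ C) :
    IntegrableOn g (Ioc 0 δ) volume := by
  have hpos : ∀ n : ℕ, 0 < δ / (n + 2) := fun n => by positivity
  have hlt : ∀ n : ℕ, δ / ((n : ℝ) + 2) < δ := by
    intro n
    rw [div_lt_iff₀ (by positivity)]
    nlinarith [Nat.cast_nonneg (α := ℝ) n]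
  refine integrableOn_Ioc_of_intervalIntegral_norm_bounded_left
    (a := fun n : ℕ => δ / ((n : ℝ) + 2)) (l := atTop) (I := C)
    (fun n => hint _ (hpos n) (hlt n)) ?_ (Eventually.of_forall fun n => hbd _ (hpos n) (hlt n))
  have h1 : Tendsto (fun n : ℕ => (n : ℝ) + 2) atTop atTop :=
    tendsto_atTop_add_const_right _ 2 tendsto_natCast_atTop_atTop
  have h3 := h1.inv_tendsto_atTop.const_mul δ
  simpa [div_eq_mul_inv] using h3


lemma continuous_tp (h2 : Integrable (fun l : ℝ => l ^ 2) μ) : Continuous (tp μ) :=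
  continuous_iff_continuousAt.2 fun τ => (hasDerivAt_tp h2 τ).differentiableAt.continuousAt

lemma continuous_Mf (h2 : Integrable (fun l : ℝ => l ^ 2) μ) : Continuous (Mf μ) :=
  continuous_iff_continuousAt.2 fun τ => (hasDerivAt_Mf h2 τ).differentiableAt.continuousAt

lemma continuous_th (h2 : Integrable (fun l : ℝ => l ^ 2) μ) : Continuous (th μ) :=
  continuous_iff_continuousAt.2 fun τ => (hasDerivAt_th h2 τ).differentiableAt.continuousAt

end KLaux

set_option maxHeartbeats 1000000 in
open KLaux in
theorem main_aux
    (μ : Measure ℝ) [IsProbabilityMeasure μ]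
    (hlam2fin : Integrable (fun l : ℝ => l ^ 2) μ)
    (hlam2pos : 0 < ∫ l : ℝ, l ^ 2 ∂μ)
    (hpos : ∃ δ₁ > (0:ℝ), ∀ τ ∈ Set.Ioc (0:ℝ) δ₁,
      0 < 1 - (specCorr μ τ) ^ 2 ∧
        0 < -(deriv (deriv (specCorr μ)) 0) - (deriv (specCorr μ) τ) ^ 2 / (1 - (specCorr μ τ) ^ 2)) :
    ∃ δ₀ > (0:ℝ), ∀ δ : ℝ, 0 < δ → δ ≤ δ₀ →
      (IntegrableOn
          (fun τ => (-(deriv (deriv (specCorr μ)) 0) -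
              (deriv (specCorr μ) τ) ^ 2 / (1 - (specCorr μ τ) ^ 2)) /
            Real.sqrt (1 - (specCorr μ τ) ^ 2))
          (Set.Ioc 0 δ) volume
        ↔ IntegrableOn (fun τ => (deriv (deriv (specCorr μ)) τ - deriv (deriv (specCorr μ)) 0) / τ)
            (Set.Ioc 0 δ) volume) := by
  classical
  obtain ⟨δ₁, hδ₁pos, hpos₁⟩ := hpos
  have h2 := hlam2fin
  set lam := ∫ l : ℝ, l ^ 2 ∂μ with hlamdef
  have hlam : 0 < lam := hlam2pos
  set c₁ := (3/8*lam) * Real.sqrt (3/8*lam) with hc₁def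
  set c₂ := lam * Real.sqrt lam with hc₂def
  have hc₁ : 0 < c₁ := by
    have : 0 < Real.sqrt (3/8*lam) := Real.sqrt_pos.2 (by linarith)
    positivity
  have hc₂ : 0 < c₂ := by
    have : 0 < Real.sqrt lam := Real.sqrt_pos.2 hlam
    positivity
  obtain ⟨δ₂, hδ₂pos, hδ₂⟩ :=
    Metric.continuousAt_iff.1 ((continuous_Kf h2).continuousAt (x := 0)) (lam/2) (by positivity)
  obtain ⟨δ₃, hδ₃pos, hδ₃⟩ :=
    Metric.continuousAt_iff.1 ((continuous_specCorr h2).continuousAt (x := 0)) (1/2) one_half_pos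
  refine ⟨min δ₁ (min (δ₂/2) (δ₃/2)), by positivity, ?_⟩
  intro δ hδ hδle
  have hδδ₁ : δ ≤ δ₁ := hδle.trans (min_le_left _ _)
  have hδδ₂ : δ < δ₂ := by
    have := hδle.trans ((min_le_left _ _).trans_eq rfl)
    have h' := hδle.trans ((min_le_right _ _).trans (min_le_left _ _)); linarith
  have hδδ₃ : δ < δ₃ := by
    have h' := hδle.trans ((min_le_right _ _).trans (min_le_right _ _)); linarith
  -- uniform bounds on [0, δ]
  have hK : ∀ s ∈ Icc (0:ℝ) δ, Kf μ s ≤ lam / 2 := by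
    intro s hs
    have hd : dist s 0 < δ₂ := by
      rw [Real.dist_eq, sub_zero, abs_of_nonneg hs.1]; exact lt_of_le_of_lt hs.2 hδδ₂
    have h := hδ₂ hd
    rw [Real.dist_eq, Kf_zero h2, sub_zero] at h
    exact (le_abs_self _).trans h.le
  have hrge : ∀ s ∈ Icc (0:ℝ) δ, 1/2 ≤ specCorr μ s := by
    intro s hs
    have hd : dist s 0 < δ₃ := by
      rw [Real.dist_eq, sub_zero, abs_of_nonneg hs.1]; exact lt_of_le_of_lt hs.2 hδδ₃
    have h := hδ₃ hd
    rw [Real.dist_eq, specCorr_zero] at h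
    have h' := abs_lt.1 h
    linarith [h'.1]
  have htp0 : ∀ τ ∈ Icc (0:ℝ) δ, 0 ≤ tp μ τ := fun τ hτ =>
    nonneg_of_hasDerivAt (hasDerivAt_tp h2) (tp_zero h2) (fun t _ => Kf_nonneg h2 t) hτ
  have htp1 : ∀ τ ∈ Icc (0:ℝ) δ, tp μ τ ≤ lam/2 * τ := by
    intro τ hτ
    have h := nonneg_of_hasDerivAt (g := fun t => lam/2 * t - tp μ t)
      (g' := fun t => lam/2 - Kf μ t)
      (fun t => (((hasDerivAt_id t).const_mul (lam/2)).congr_deriv (mul_one _)).sub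
        (hasDerivAt_tp h2 t))
      (by simp [tp_zero h2]) (fun t ht => by linarith [hK t ht]) hτ
    linarith
  have hth0 : ∀ τ ∈ Icc (0:ℝ) δ, 0 ≤ th μ τ := fun τ hτ =>
    nonneg_of_hasDerivAt (hasDerivAt_th h2) th_zero (fun t ht => htp0 t ht) hτ
  have hth1 : ∀ τ ∈ Icc (0:ℝ) δ, th μ τ ≤ lam * τ^2/4 := by
    intro τ hτ
    have h := nonneg_of_hasDerivAt (g := fun t => lam * t^2/4 - th μ t)
      (g' := fun t => lam/2 * t - tp μ t)
      (fun t => ((((hasDerivAt_pow 2 t).const_mul lam).div_const 4).congr_deriv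
        (by push_cast; ring)).sub (hasDerivAt_th h2 t))
      (by simp [th_zero]) (fun t ht => by linarith [htp1 t ht]) hτ
    linarith
  have hM0 : ∀ τ ∈ Icc (0:ℝ) δ, 0 ≤ Mf μ τ := fun τ hτ =>
    nonneg_of_hasDerivAt (hasDerivAt_Mf h2) (Mf_zero h2)
      (fun t ht => mul_nonneg ht.1 (Kf_nonneg h2 t)) hτ
  have hM1 : ∀ τ ∈ Icc (0:ℝ) δ, Mf μ τ ≤ lam * τ^2/4 := by
    intro τ hτ
    have h := nonneg_of_hasDerivAt (g := fun t => lam * t^2/4 - Mf μ t)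
      (g' := fun t => lam/2 * t - t * Kf μ t)
      (fun t => ((((hasDerivAt_pow 2 t).const_mul lam).div_const 4).congr_deriv
        (by push_cast; ring)).sub (hasDerivAt_Mf h2 t))
      (by simp [Mf_zero h2])
      (fun t ht => by nlinarith [mul_nonneg ht.1 (sub_nonneg.2 (hK t ht))]) hτ
    linarith
  -- pointwise facts on (0, δ]
  have hIccsub : Ioc (0:ℝ) δ ⊆ Icc (0:ℝ) δ := Ioc_subset_Icc_self
  have hApos : ∀ τ ∈ Ioc (0:ℝ) δ, 0 < 1 - specCorr μ τ ^ 2 := fun τ hτ =>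
    (hpos₁ τ ⟨hτ.1, hτ.2.trans hδδ₁⟩).1
  have hAeq : ∀ τ : ℝ, 1 - specCorr μ τ ^ 2
      = (lam * τ^2/2 - th μ τ) * (1 + specCorr μ τ) := by
    intro τ
    have e1 : th μ τ = specCorr μ τ - 1 + lam * τ ^ 2 / 2 := rfl
    rw [e1]; ring
  have hA_lo : ∀ τ ∈ Ioc (0:ℝ) δ, 3/8*lam*τ^2 ≤ 1 - specCorr μ τ ^ 2 := by
    intro τ hτ
    rw [hAeq]
    have h1 := hth1 τ (hIccsub hτ)
    have hu : lam*τ^2/4 ≤ lam*τ^2/2 - th μ τ := by linarith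
    have h32 : (3:ℝ)/2 ≤ 1 + specCorr μ τ := by linarith [hrge τ (hIccsub hτ)]
    have hmul := mul_le_mul hu h32 (by norm_num)
      (by linarith [mul_nonneg hlam.le (sq_nonneg τ)])
    calc 3/8*lam*τ^2 = lam*τ^2/4 * (3/2) := by ring
      _ ≤ _ := hmul
  have hA_hi : ∀ τ ∈ Ioc (0:ℝ) δ, 1 - specCorr μ τ ^ 2 ≤ lam*τ^2 := by
    intro τ hτ
    rw [hAeq]
    have h1 := hth0 τ (hIccsub hτ)
    have hu : lam*τ^2/2 - th μ τ ≤ lam*τ^2/2 := by linarith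
    have h2' : 1 + specCorr μ τ ≤ 2 := by linarith [specCorr_le_one (μ := μ) τ]
    have hu0 : 0 ≤ lam*τ^2/2 - th μ τ := by
      have := hth1 τ (hIccsub hτ); nlinarith [sq_nonneg τ]
    have hmul := mul_le_mul hu h2' (by linarith [hrge τ (hIccsub hτ)]) (by positivity)
    calc (lam*τ^2/2 - th μ τ) * (1 + specCorr μ τ) ≤ lam*τ^2/2 * 2 := hmul
      _ = lam*τ^2 := by ring
  have hsqrt_lo : ∀ τ ∈ Ioc (0:ℝ) δ,
      c₁ * τ^3 ≤ (1 - specCorr μ τ ^ 2) * Real.sqrt (1 - specCorr μ τ ^ 2) := by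
    intro τ hτ
    have hτ0 : 0 < τ := hτ.1
    have hlo := hA_lo τ hτ
    have hApos' := hApos τ hτ
    have hs_lo : Real.sqrt (3/8*lam) * τ ≤ Real.sqrt (1 - specCorr μ τ ^ 2) := by
      have h := Real.sqrt_le_sqrt hlo
      rwa [show (3:ℝ)/8*lam*τ^2 = (3/8*lam)*τ^2 by ring, Real.sqrt_mul (by positivity),
        Real.sqrt_sq hτ0.le] at h
    calc c₁ * τ^3 = (3/8*lam*τ^2) * (Real.sqrt (3/8*lam) * τ) := by rw [hc₁def]; ring
      _ ≤ _ := mul_le_mul hlo hs_lo (by positivity) hApos'.le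
  have hsqrt_hi : ∀ τ ∈ Ioc (0:ℝ) δ,
      (1 - specCorr μ τ ^ 2) * Real.sqrt (1 - specCorr μ τ ^ 2) ≤ c₂ * τ^3 := by
    intro τ hτ
    have hτ0 : 0 < τ := hτ.1
    have hhi := hA_hi τ hτ
    have hs_hi : Real.sqrt (1 - specCorr μ τ ^ 2) ≤ Real.sqrt lam * τ := by
      have h := Real.sqrt_le_sqrt hhi
      rwa [Real.sqrt_mul hlam.le, Real.sqrt_sq hτ0.le] at h
    calc (1 - specCorr μ τ ^ 2) * Real.sqrt (1 - specCorr μ τ ^ 2)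
        ≤ (lam*τ^2) * (Real.sqrt lam * τ) :=
          mul_le_mul hhi hs_hi (Real.sqrt_nonneg _) (by positivity)
      _ = c₂ * τ^3 := by rw [hc₂def]; ring
  have hNpos : ∀ τ ∈ Ioc (0:ℝ) δ,
      0 < lam * (1 - specCorr μ τ ^ 2) - (deriv (specCorr μ) τ)^2 := by
    intro τ hτ
    have h := (hpos₁ τ ⟨hτ.1, hτ.2.trans hδδ₁⟩).2
    have hApos' := hApos τ hτ
    rw [deriv2_specCorr_zero h2, ← hlamdef, neg_neg] at h
    have hid : lam * (1 - specCorr μ τ ^ 2) - (deriv (specCorr μ) τ)^2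
        = (lam - (deriv (specCorr μ) τ)^2 / (1 - specCorr μ τ ^ 2)) *
          (1 - specCorr μ τ ^ 2) := by
      field_simp
    rw [hid]
    exact mul_pos h hApos'
  have hNle : ∀ τ ∈ Ioc (0:ℝ) δ,
      lam * (1 - specCorr μ τ ^ 2) - (deriv (specCorr μ) τ)^2 ≤ 2*lam*Mf μ τ := by
    intro τ hτ
    have hkey : lam * (1 - specCorr μ τ ^ 2) - (deriv (specCorr μ) τ)^2
        = 2*lam*Mf μ τ - lam*(lam*τ^2/2 - th μ τ)^2 - (tp μ τ)^2 := by
      have e3 : Mf μ τ = τ * tp μ τ - th μ τ := rfl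
      have e2 : tp μ τ = deriv (specCorr μ) τ + lam * τ := rfl
      have e1 : th μ τ = specCorr μ τ - 1 + lam * τ ^ 2 / 2 := rfl
      rw [e3, e2, e1]; ring
    rw [hkey]
    nlinarith [mul_nonneg hlam.le (sq_nonneg (lam*τ^2/2 - th μ τ)), sq_nonneg (tp μ τ)]
  have hfeq : ∀ τ ∈ Ioc (0:ℝ) δ,
      (-(deriv (deriv (specCorr μ)) 0) -
          (deriv (specCorr μ) τ)^2 / (1 - specCorr μ τ ^ 2)) /
          Real.sqrt (1 - specCorr μ τ ^ 2)
        = (lam * (1 - specCorr μ τ ^ 2) - (deriv (specCorr μ) τ)^2) /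
            ((1 - specCorr μ τ ^ 2) * Real.sqrt (1 - specCorr μ τ ^ 2)) := by
    intro τ hτ
    have hApos' := hApos τ hτ
    have hs : 0 < Real.sqrt (1 - specCorr μ τ ^ 2) := Real.sqrt_pos.2 hApos'
    rw [deriv2_specCorr_zero h2, ← hlamdef, neg_neg]
    field_simp
  -- derived pointwise bounds
  have hfpos : ∀ τ ∈ Ioc (0:ℝ) δ,
      0 < (-(deriv (deriv (specCorr μ)) 0) -
          (deriv (specCorr μ) τ)^2 / (1 - specCorr μ τ ^ 2)) /
          Real.sqrt (1 - specCorr μ τ ^ 2) := by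
    intro τ hτ
    rw [hfeq τ hτ]
    exact div_pos (hNpos τ hτ)
      (mul_pos (hApos τ hτ) (Real.sqrt_pos.2 (hApos τ hτ)))
  have hfle : ∀ τ ∈ Ioc (0:ℝ) δ,
      (-(deriv (deriv (specCorr μ)) 0) -
          (deriv (specCorr μ) τ)^2 / (1 - specCorr μ τ ^ 2)) /
          Real.sqrt (1 - specCorr μ τ ^ 2) ≤ 2*lam/c₁ * (Mf μ τ / τ^3) := by
    intro τ hτ
    have hτ0 : 0 < τ := hτ.1
    rw [hfeq τ hτ]
    have h1 := div_le_div_of_nonneg_left (hNpos τ hτ).le (by positivity : 0 < c₁ * τ^3)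
      (hsqrt_lo τ hτ)
    have h2' : (lam * (1 - specCorr μ τ ^ 2) - (deriv (specCorr μ) τ)^2) / (c₁ * τ^3)
        ≤ (2*lam*Mf μ τ) / (c₁ * τ^3) :=
      (div_le_div_iff_of_pos_right (by positivity)).2 (hNle τ hτ)
    have h3 : (2*lam*Mf μ τ) / (c₁ * τ^3) = 2*lam/c₁ * (Mf μ τ / τ^3) := by
      field_simp
    linarith [h1.trans (h2'.trans_eq h3)]
  have hNdivle : ∀ τ ∈ Ioc (0:ℝ) δ,
      (lam * (1 - specCorr μ τ ^ 2) - (deriv (specCorr μ) τ)^2) / τ^3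
        ≤ c₂ * ((-(deriv (deriv (specCorr μ)) 0) -
            (deriv (specCorr μ) τ)^2 / (1 - specCorr μ τ ^ 2)) /
            Real.sqrt (1 - specCorr μ τ ^ 2)) := by
    intro τ hτ
    have hτ0 : 0 < τ := hτ.1
    rw [hfeq τ hτ]
    have h1 := div_le_div_of_nonneg_left (hNpos τ hτ).le
      (mul_pos (hApos τ hτ) (Real.sqrt_pos.2 (hApos τ hτ))) (hsqrt_hi τ hτ)
    have h2' : (lam * (1 - specCorr μ τ ^ 2) - (deriv (specCorr μ) τ)^2) / τ^3
        = c₂ * ((lam * (1 - specCorr μ τ ^ 2) - (deriv (specCorr μ) τ)^2) / (c₂*τ^3)) := by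
      field_simp
    rw [h2']
    exact mul_le_mul_of_nonneg_left h1 hc₂.le
  -- continuity on (0, δ]
  have hcontA : Continuous (fun t => 1 - specCorr μ t ^ 2) :=
    continuous_const.sub ((continuous_specCorr h2).pow 2)
  have hcontf : ContinuousOn
      (fun τ => (-(deriv (deriv (specCorr μ)) 0) -
          (deriv (specCorr μ) τ)^2 / (1 - specCorr μ τ ^ 2)) /
          Real.sqrt (1 - specCorr μ τ ^ 2)) (Ioc 0 δ) := by
    refine ContinuousOn.div (ContinuousOn.sub continuousOn_const
      (ContinuousOn.div (((continuous_deriv_specCorr h2).pow 2).continuousOn)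
        hcontA.continuousOn (fun t ht => (hApos t ht).ne')))
      ((Real.continuous_sqrt.comp hcontA).continuousOn)
      (fun t ht => (Real.sqrt_pos.2 (hApos t ht)).ne')
  have hcontL : ContinuousOn (fun t => Kf μ t / t) (Ioc (0:ℝ) δ) :=
    ContinuousOn.div (continuous_Kf h2).continuousOn continuousOn_id
      (fun t ht => ht.1.ne')
  have hcontMdiv : ContinuousOn (fun t => Mf μ t / t^3) (Ioc (0:ℝ) δ) :=
    ContinuousOn.div (continuous_Mf h2).continuousOn (by fun_prop)
      (fun t ht => by have := ht.1; positivity)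
  have hconte : ContinuousOn (fun t => (tp μ t)^2 / t^3) (Ioc (0:ℝ) δ) :=
    ContinuousOn.div ((continuous_tp h2).pow 2).continuousOn (by fun_prop)
      (fun t ht => by have := ht.1; positivity)
  have hcontgt : ContinuousOn (fun t => lam*(lam*t^2/2 - th μ t)^2 / t^3) (Ioc (0:ℝ) δ) := by
    refine ContinuousOn.div ?_ (by fun_prop) (fun t ht => by have := ht.1; positivity)
    have hcc : Continuous (fun t : ℝ => lam*(lam*t^2/2 - th μ t)^2) := by
      have h1 : Continuous (fun t : ℝ => lam*t^2/2 - th μ t) :=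
        ((continuous_const.mul (continuous_pow 2)).div_const 2).sub (continuous_th h2)
      exact continuous_const.mul (h1.pow 2)
    exact hcc.continuousOn
  have hcontNdiv : ContinuousOn
      (fun t => (lam * (1 - specCorr μ t ^ 2) - (deriv (specCorr μ) t)^2) / t^3)
      (Ioc (0:ℝ) δ) := by
    refine ContinuousOn.div ?_ (by fun_prop) (fun t ht => by have := ht.1; positivity)
    exact ((continuous_const.mul hcontA).sub ((continuous_deriv_specCorr h2).pow 2)).continuousOn
  have hcontprod : ContinuousOn (fun t => tp μ t / t * (Kf μ t / t)) (Ioc (0:ℝ) δ) :=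
    ContinuousOn.mul (ContinuousOn.div (continuous_tp h2).continuousOn continuousOn_id
      (fun t ht => ht.1.ne')) hcontL
  -- integrability helpers
  have hIocInt : ∀ {g : ℝ → ℝ}, ContinuousOn g (Ioc 0 δ) → ∀ a : ℝ, 0 < a → a ≤ δ →
      IntegrableOn g (Ioc a δ) volume := by
    intro g hg a ha haδ
    have hsub : Icc a δ ⊆ Ioc 0 δ := fun t ht => ⟨ha.trans_le ht.1, ht.2⟩
    exact ((hg.mono hsub).integrableOn_Icc).mono_set Ioc_subset_Icc_self
  have hII : ∀ {g : ℝ → ℝ}, ContinuousOn g (Ioc 0 δ) → ∀ a : ℝ, 0 < a → a ≤ δ →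
      IntervalIntegrable g volume a δ := by
    intro g hg a ha haδ
    have hsub : Icc a δ ⊆ Ioc 0 δ := fun t ht => ⟨ha.trans_le ht.1, ht.2⟩
    exact ContinuousOn.intervalIntegrable_of_Icc haδ (hg.mono hsub)
  -- FTC consequence
  have key : ∀ a : ℝ, 0 < a → a < δ →
      (∫ t in a..δ, Mf μ t / t^3)
        = (∫ t in a..δ, Kf μ t / t)/2 - Mf μ δ/(2*δ^2) + Mf μ a/(2*a^2) := by
    intro a ha haδ
    have hsplit := ID1 h2 (μ := μ) ha haδ.le
    have hIIL2 : IntervalIntegrable (fun t => Kf μ t / t / 2) volume a δ :=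
      (hII hcontL a ha haδ.le).div_const 2
    have hIIM : IntervalIntegrable (fun t => Mf μ t / t^3) volume a δ :=
      hII hcontMdiv a ha haδ.le
    rw [intervalIntegral.integral_sub hIIL2 hIIM, intervalIntegral.integral_div] at hsplit
    linarith
  have hPhi : ∀ s ∈ Icc (0:ℝ) δ, 0 < s → Mf μ s/(2*s^2) ≤ lam/8 := by
    intro s hs hs0
    rw [div_le_iff₀ (by positivity)]
    have := hM1 s hs
    nlinarith
  have hPhi0 : ∀ s ∈ Icc (0:ℝ) δ, 0 ≤ Mf μ s/(2*s^2) := by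
    intro s hs
    have := hM0 s hs
    positivity
  have hPsi : ∀ s ∈ Icc (0:ℝ) δ, 0 < s → (tp μ s)^2/(2*s^2) ≤ lam^2/8 := by
    intro s hs hs0
    rw [div_le_iff₀ (by positivity)]
    nlinarith [htp1 s hs, htp0 s hs]
  -- direction 1 : Geman integrable → density integrable
  have dir1 : IntegrableOn (fun t => Kf μ t / t) (Ioc 0 δ) volume →
      IntegrableOn (fun τ => (-(deriv (deriv (specCorr μ)) 0) -
          (deriv (specCorr μ) τ)^2 / (1 - specCorr μ τ ^ 2)) /
          Real.sqrt (1 - specCorr μ τ ^ 2)) (Ioc 0 δ) volume := by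
    intro hLint
    have hLnonneg : 0 ≤ᵐ[volume.restrict (Ioc 0 δ)] (fun t => Kf μ t / t) :=
      (ae_restrict_iff' measurableSet_Ioc).2 (ae_of_all _ fun x hx =>
        div_nonneg (Kf_nonneg h2 x) hx.1.le)
    have hMdivInt : IntegrableOn (fun t => Mf μ t / t^3) (Ioc 0 δ) volume := by
      refine integrableOn_Ioc_of_bound
        (C := (∫ t in Ioc 0 δ, Kf μ t / t)/2 + lam/8) hδ
        (fun a ha haδ => hIocInt hcontMdiv a ha haδ.le) ?_
      intro a ha haδ
      have e1 : (∫ x in Ioc a δ, ‖Mf μ x / x^3‖) = ∫ x in Ioc a δ, Mf μ x / x^3 := by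
        refine setIntegral_congr_fun measurableSet_Ioc (fun x hx => ?_)
        have hx0 : 0 < x := ha.trans hx.1
        rw [Real.norm_eq_abs, abs_of_nonneg]
        exact div_nonneg (hM0 x ⟨hx0.le, hx.2⟩) (by positivity)
      rw [e1, ← intervalIntegral.integral_of_le haδ.le, key a ha haδ]
      have hJL : (∫ t in a..δ, Kf μ t / t) ≤ ∫ t in Ioc 0 δ, Kf μ t / t := by
        rw [intervalIntegral.integral_of_le haδ.le]
        exact setIntegral_mono_set hLint hLnonneg (Ioc_subset_Ioc_left ha.le).eventuallyLE
      have hb1 := hPhi a ⟨ha.le, haδ.le⟩ ha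
      have hb2 := hPhi0 δ ⟨hδ.le, le_refl δ⟩
      linarith
    refine (hMdivInt.const_mul (2*lam/c₁)).mono'
      (hcontf.aestronglyMeasurable measurableSet_Ioc) ?_
    refine (ae_restrict_iff' measurableSet_Ioc).2 (ae_of_all _ fun x hx => ?_)
    rw [Real.norm_eq_abs, abs_of_nonneg (hfpos x hx).le]
    exact hfle x hx
  -- direction 2 : density integrable → Geman integrable
  have dir2 : IntegrableOn (fun τ => (-(deriv (deriv (specCorr μ)) 0) -
          (deriv (specCorr μ) τ)^2 / (1 - specCorr μ τ ^ 2)) /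
          Real.sqrt (1 - specCorr μ τ ^ 2)) (Ioc 0 δ) volume →
      IntegrableOn (fun t => Kf μ t / t) (Ioc 0 δ) volume := by
    intro hfInt
    have hfnonneg : 0 ≤ᵐ[volume.restrict (Ioc 0 δ)]
        (fun τ => (-(deriv (deriv (specCorr μ)) 0) -
          (deriv (specCorr μ) τ)^2 / (1 - specCorr μ τ ^ 2)) /
          Real.sqrt (1 - specCorr μ τ ^ 2)) :=
      (ae_restrict_iff' measurableSet_Ioc).2 (ae_of_all _ fun x hx => (hfpos x hx).le)
    refine integrableOn_Ioc_of_bound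
      (C := 2/lam * (c₂ * (∫ τ in Ioc 0 δ, (-(deriv (deriv (specCorr μ)) 0) -
          (deriv (specCorr μ) τ)^2 / (1 - specCorr μ τ ^ 2)) /
          Real.sqrt (1 - specCorr μ τ ^ 2)) + lam^3*δ^2/8 + lam^2)) hδ
      (fun a ha haδ => hIocInt hcontL a ha haδ.le) ?_
    intro a ha haδ
    have e1 : (∫ x in Ioc a δ, ‖Kf μ x / x‖) = ∫ t in a..δ, Kf μ t / t := by
      rw [← intervalIntegral.integral_of_le haδ.le]
      rw [intervalIntegral.integral_of_le haδ.le, intervalIntegral.integral_of_le haδ.le]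
      refine setIntegral_congr_fun measurableSet_Ioc (fun x hx => ?_)
      have hx0 : 0 < x := ha.trans hx.1
      rw [Real.norm_eq_abs, abs_of_nonneg (div_nonneg (Kf_nonneg h2 x) hx0.le)]
    rw [e1]
    have hIIL := hII hcontL a ha haδ.le
    have hIIM := hII hcontMdiv a ha haδ.le
    have hIIe := hII hconte a ha haδ.le
    have hIIgt := hII hcontgt a ha haδ.le
    have hIIN := hII hcontNdiv a ha haδ.le
    have hIIf := hII hcontf a ha haδ.le
    have hIIprod := hII hcontprod a ha haδ.le
    -- bound on ∫ e via ID2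
    have hsplit2 := ID2 h2 (μ := μ) ha haδ.le
    rw [intervalIntegral.integral_sub hIIprod hIIe] at hsplit2
    have hJprod : (∫ t in a..δ, tp μ t / t * (Kf μ t / t))
        ≤ lam/2 * (∫ t in a..δ, Kf μ t / t) := by
      have hmono := intervalIntegral.integral_mono_on haδ.le hIIprod
        (hIIL.const_mul (lam/2)) (fun x hx => ?_)
      · rwa [intervalIntegral.integral_const_mul] at hmono
      · have hx0 : 0 < x := ha.trans_le hx.1
        have h1 : tp μ x / x ≤ lam/2 := by
          rw [div_le_iff₀ hx0]
          exact htp1 x ⟨hx0.le, hx.2⟩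
        exact mul_le_mul_of_nonneg_right h1 (div_nonneg (Kf_nonneg h2 x) hx0.le)
    have hJe : (∫ t in a..δ, (tp μ t)^2/t^3)
        ≤ lam/2 * (∫ t in a..δ, Kf μ t / t) + lam^2/8 := by
      have hb1 := hPsi a ⟨ha.le, haδ.le⟩ ha
      have hb2 : 0 ≤ (tp μ δ)^2/(2*δ^2) := by positivity
      linarith
    -- splitting ∫ M/t³
    have hmdiv_id : (2*lam) * (∫ t in a..δ, Mf μ t / t^3)
        = ∫ t in a..δ,
            ((lam * (1 - specCorr μ t ^ 2) - (deriv (specCorr μ) t)^2)/t^3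
              + lam*(lam*t^2/2 - th μ t)^2/t^3 + (tp μ t)^2/t^3) := by
      rw [← intervalIntegral.integral_const_mul]
      refine intervalIntegral.integral_congr (fun t ht => ?_)
      rw [Set.uIcc_of_le haδ.le] at ht
      have ht0 : 0 < t := ha.trans_le ht.1
      have hkey : lam * (1 - specCorr μ t ^ 2) - (deriv (specCorr μ) t)^2
          = 2*lam*Mf μ t - lam*(lam*t^2/2 - th μ t)^2 - (tp μ t)^2 := by
        have e3 : Mf μ t = t * tp μ t - th μ t := rfl
        have e2' : tp μ t = deriv (specCorr μ) t + lam * t := rfl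
        have e1' : th μ t = specCorr μ t - 1 + lam * t ^ 2 / 2 := rfl
        rw [e3, e2', e1']; ring
      rw [hkey]
      field_simp
      ring
    have hsplit3 : (2*lam) * (∫ t in a..δ, Mf μ t / t^3)
        = (∫ t in a..δ, (lam * (1 - specCorr μ t ^ 2) - (deriv (specCorr μ) t)^2)/t^3)
          + (∫ t in a..δ, lam*(lam*t^2/2 - th μ t)^2/t^3)
          + (∫ t in a..δ, (tp μ t)^2/t^3) := by
      rw [hmdiv_id, intervalIntegral.integral_add (hIIN.add hIIgt) hIIe,
        intervalIntegral.integral_add hIIN hIIgt]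
    -- bound ∫ N/t³ by the density integral
    have hJN : (∫ t in a..δ, (lam * (1 - specCorr μ t ^ 2) - (deriv (specCorr μ) t)^2)/t^3)
        ≤ c₂ * (∫ τ in Ioc 0 δ, (-(deriv (deriv (specCorr μ)) 0) -
            (deriv (specCorr μ) τ)^2 / (1 - specCorr μ τ ^ 2)) /
            Real.sqrt (1 - specCorr μ τ ^ 2)) := by
      have hmono := intervalIntegral.integral_mono_on haδ.le hIIN
        (hIIf.const_mul c₂) (fun x hx => hNdivle x ⟨ha.trans_le hx.1, hx.2⟩)
      rw [intervalIntegral.integral_const_mul] at hmono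
      have hstep : (∫ t in a..δ, (-(deriv (deriv (specCorr μ)) 0) -
            (deriv (specCorr μ) t)^2 / (1 - specCorr μ t ^ 2)) /
            Real.sqrt (1 - specCorr μ t ^ 2))
          ≤ ∫ τ in Ioc 0 δ, (-(deriv (deriv (specCorr μ)) 0) -
            (deriv (specCorr μ) τ)^2 / (1 - specCorr μ τ ^ 2)) /
            Real.sqrt (1 - specCorr μ τ ^ 2) := by
        rw [intervalIntegral.integral_of_le haδ.le]
        exact setIntegral_mono_set hfInt hfnonneg (Ioc_subset_Ioc_left ha.le).eventuallyLE
      calc (∫ t in a..δ, (lam * (1 - specCorr μ t ^ 2) - (deriv (specCorr μ) t)^2)/t^3)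
          ≤ c₂ * (∫ t in a..δ, (-(deriv (deriv (specCorr μ)) 0) -
              (deriv (specCorr μ) t)^2 / (1 - specCorr μ t ^ 2)) /
              Real.sqrt (1 - specCorr μ t ^ 2)) := hmono
        _ ≤ _ := mul_le_mul_of_nonneg_left hstep hc₂.le
    -- bound ∫ gt
    have hJgt : (∫ t in a..δ, lam*(lam*t^2/2 - th μ t)^2/t^3) ≤ lam^3*δ^2/8 := by
      have hIIlin : IntervalIntegrable (fun x : ℝ => lam^3/4 * x) volume a δ :=
        (intervalIntegral.intervalIntegrable_id).const_mul _
      have hmono := intervalIntegral.integral_mono_on haδ.le hIIgt hIIlin (fun x hx => ?_)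
      · have : (∫ x in a..δ, lam^3/4 * x) = lam^3/4 * ((δ^2 - a^2)/2) := by
          rw [intervalIntegral.integral_const_mul, integral_id]
        rw [this] at hmono
        nlinarith [mul_nonneg (pow_nonneg hlam.le 3) (sq_nonneg a)]
      · have hx0 : 0 < x := ha.trans_le hx.1
        have hxI : x ∈ Icc (0:ℝ) δ := ⟨hx0.le, hx.2⟩
        have hu0 := hth0 x hxI
        have hu1 := hth1 x hxI
        have h0 : 0 ≤ lam*x^2/2 - th μ x := by
          nlinarith [mul_nonneg hlam.le (sq_nonneg x)]
        have h1 : lam*x^2/2 - th μ x ≤ lam*x^2/2 := by linarith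
        have husq : (lam*x^2/2 - th μ x)^2 ≤ (lam*x^2/2)^2 := pow_le_pow_left₀ h0 h1 2
        have hd : lam*(lam*x^2/2 - th μ x)^2/x^3 ≤ lam*(lam*x^2/2)^2/x^3 := by
          apply (div_le_div_iff_of_pos_right (by positivity)).2
          exact mul_le_mul_of_nonneg_left husq hlam.le
        have heq : lam*(lam*x^2/2)^2/x^3 = lam^3/4 * x := by
          field_simp
          ring
        linarith
    -- combine
    have hkey2 := key a ha haδ
    have hb1 := hPhi δ ⟨hδ.le, le_refl δ⟩ hδ
    have hb2 := hPhi0 a ⟨ha.le, haδ.le⟩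
    have hJL2 : (∫ t in a..δ, Kf μ t / t) ≤ 2*(∫ t in a..δ, Mf μ t / t^3) + lam/4 := by
      linarith
    have hmul := mul_le_mul_of_nonneg_left hJL2 hlam.le
    have hfin : lam/2 * (∫ t in a..δ, Kf μ t / t)
        ≤ c₂ * (∫ τ in Ioc 0 δ, (-(deriv (deriv (specCorr μ)) 0) -
            (deriv (specCorr μ) τ)^2 / (1 - specCorr μ τ ^ 2)) /
            Real.sqrt (1 - specCorr μ τ ^ 2)) + lam^3*δ^2/8 + lam^2 := by
      nlinarith [hsplit3, hJN, hJgt, hJe, hmul, sq_nonneg lam]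
    calc (∫ t in a..δ, Kf μ t / t)
        = 2/lam * (lam/2 * (∫ t in a..δ, Kf μ t / t)) := by
          field_simp
      _ ≤ _ := mul_le_mul_of_nonneg_left hfin (by positivity)
  -- conclusion
  have hgemEq : EqOn
      (fun τ : ℝ => (deriv (deriv (specCorr μ)) τ - deriv (deriv (specCorr μ)) 0) / τ)
      (fun t => Kf μ t / t) (Ioc 0 δ) := by
    intro x hx
    have hKx : Kf μ x = lam + deriv (deriv (specCorr μ)) x := by
      have : Kf μ x = (∫ l : ℝ, l ^ 2 ∂μ) + deriv (deriv (specCorr μ)) x := rfl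
      rw [this, ← hlamdef]
    show (deriv (deriv (specCorr μ)) x - deriv (deriv (specCorr μ)) 0) / x = Kf μ x / x
    rw [deriv2_specCorr_zero h2, ← hlamdef, hKx]
    ring_nf
  constructor
  · intro hf
    exact (integrableOn_congr_fun hgemEq measurableSet_Ioc).2 (dir2 hf)
  · intro hg
    exact dir1 ((integrableOn_congr_fun hgemEq measurableSet_Ioc).1 hg)


/-- for `δ > 0` small enough, `∫₀^δ σ²(τ)/√(1 − r²(τ)) dτ < ∞` iff
`∫₀^δ L(τ) dτ < ∞` (the Geman condition). -/
theorem sigmaSq_integrable_iff_geman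
    (μ : Measure ℝ) [IsProbabilityMeasure μ]
    (hsymm : Measure.map (fun l => -l) μ = μ)
    (hlam2fin : Integrable (fun l : ℝ => l ^ 2) μ)
    (hlam2pos : 0 < ∫ l : ℝ, l ^ 2 ∂μ)
    (hsupp : ∀ a b : ℝ, μ ({a, b}ᶜ) ≠ 0)
    (hcond1 : ConditionOne (specCorr μ))
    (hpos : ∃ δ₁ > (0:ℝ), ∀ τ ∈ Set.Ioc (0:ℝ) δ₁,
      0 < 1 - (specCorr μ τ) ^ 2 ∧ 0 < sigmaSq μ τ) :
    ∃ δ₀ > (0:ℝ), ∀ δ : ℝ, 0 < δ → δ ≤ δ₀ →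
      (IntegrableOn (fun τ => sigmaSq μ τ / Real.sqrt (1 - (specCorr μ τ) ^ 2))
          (Set.Ioc 0 δ) volume
        ↔ IntegrableOn (gemanL μ) (Set.Ioc 0 δ) volume) := by
  have hpos' : ∃ δ₁ > (0:ℝ), ∀ τ ∈ Set.Ioc (0:ℝ) δ₁,
      0 < 1 - (specCorr μ τ) ^ 2 ∧
        0 < -(deriv (deriv (specCorr μ)) 0) -
          (deriv (specCorr μ) τ) ^ 2 / (1 - (specCorr μ τ) ^ 2) := by
    obtain ⟨δ₁, h, hp⟩ := hpos
    exact ⟨δ₁, h, fun τ hτ => ⟨(hp τ hτ).1, (hp τ hτ).2⟩⟩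
  exact main_aux μ hlam2fin hlam2pos hpos'
end
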